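/- arXiv:2509.14809 — 11 statements merged into one kernel-verified Lean document; each statement's English description precedes it below -/
import Mathlib

section
/- Let 0 < β < 1/2 and ρ_m, ρ_n > 0, and set z1 = 1 + (1-β)ρ_m/(β²ρ_n) and z2 = (1-2β)/(β²ρ_n). Then ∫_0^∞ ∫_0^∞ 1{(1 + βρ_n y/(ρ_m x + 1))·(1 + βρ_n y) ≤ 1 + ρ_n y} · e^{-(x+y)} dy dx = 1 − (1/z1)·e^{-z2}. -/
open MeasureTheory Real

theorem fsic_failure_probability
    (β ρm ρn : ℝ) (hβ0 : 0 < β) (hβ1 : β < 1/2)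
    (hρm : 0 < ρm) (hρn : 0 < ρn)
    (z1 z2 : ℝ)
    (hz1 : z1 = 1 + (1 - β) * ρm / (β ^ 2 * ρn))
    (hz2 : z2 = (1 - 2 * β) / (β ^ 2 * ρn)) :
    (∫ x in Set.Ioi (0:ℝ), ∫ y in Set.Ioi (0:ℝ),
        (if (1 + β * ρn * y / (ρm * x + 1)) * (1 + β * ρn * y) ≤ 1 + ρn * y
          then Real.exp (-(x + y)) else 0))
      = 1 - (1 / z1) * Real.exp (-z2) := by
  have hb2 : (0:ℝ) < β ^ 2 * ρn := by positivity
  have hz2pos : 0 < z2 := by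
    rw [hz2]; apply div_pos _ hb2; linarith
  have hz1' : z1 - 1 = (1 - β) * ρm / (β ^ 2 * ρn) := by rw [hz1]; ring
  have hz1m1pos : 0 < z1 - 1 := by
    rw [hz1']; apply div_pos _ hb2
    have : 0 < 1 - β := by linarith
    positivity
  have hz1pos : 0 < z1 := by linarith
  -- inner integral computation
  have inner : ∀ x ∈ Set.Ioi (0:ℝ),
      (∫ y in Set.Ioi (0:ℝ),
        (if (1 + β * ρn * y / (ρm * x + 1)) * (1 + β * ρn * y) ≤ 1 + ρn * y
          then Real.exp (-(x + y)) else 0))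
      = Real.exp (-x) - Real.exp (-(z1 * x + z2)) := by
    intro x hx
    rw [Set.mem_Ioi] at hx
    set c := z2 + (z1 - 1) * x with hc
    have hcpos : 0 < c := by
      have := mul_pos hz1m1pos hx; positivity
    have hd : (0:ℝ) < ρm * x + 1 := by positivity
    have hcond : ∀ y : ℝ, 0 < y →
        ((1 + β * ρn * y / (ρm * x + 1)) * (1 + β * ρn * y) ≤ 1 + ρn * y ↔ y ≤ c) := by
      intro y hy
      have hcmul : β ^ 2 * ρn * c = (1 - β) * ρm * x + (1 - 2 * β) := by
        rw [hc, hz2, hz1']; field_simp; ring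
      have step1 : (1 + β * ρn * y / (ρm * x + 1)) * (1 + β * ρn * y) ≤ 1 + ρn * y ↔
          ((ρm * x + 1) + β * ρn * y) * (1 + β * ρn * y) ≤ (1 + ρn * y) * (ρm * x + 1) := by
        rw [show 1 + β * ρn * y / (ρm * x + 1) = ((ρm * x + 1) + β * ρn * y) / (ρm * x + 1) by
          field_simp, div_mul_eq_mul_div, div_le_iff₀ hd]
      rw [step1]
      constructor
      · intro h
        have h2 : β ^ 2 * ρn * y ≤ (1 - β) * ρm * x + (1 - 2 * β) := by
          nlinarith [mul_pos hρn hy]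
        rw [← hcmul] at h2
        exact le_of_mul_le_mul_left (by linarith) hb2
      · intro h
        have h2 : β ^ 2 * ρn * y ≤ β ^ 2 * ρn * c := by
          exact mul_le_mul_of_nonneg_left h (le_of_lt hb2)
        rw [hcmul] at h2
        nlinarith [mul_pos hρn hy]
    have heq : ∫ y in Set.Ioi (0:ℝ),
        (if (1 + β * ρn * y / (ρm * x + 1)) * (1 + β * ρn * y) ≤ 1 + ρn * y
          then Real.exp (-(x + y)) else 0)
        = ∫ y in Set.Ioi (0:ℝ),
          (Set.Ioc (0:ℝ) c).indicator (fun y => Real.exp (-(x + y))) y := by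
      apply setIntegral_congr_fun measurableSet_Ioi
      intro y hy
      rw [Set.mem_Ioi] at hy
      rw [Set.indicator_apply]
      dsimp only
      by_cases h : y ≤ c
      · rw [if_pos ((hcond y hy).mpr h), if_pos (Set.mem_Ioc.mpr ⟨hy, h⟩)]
      · rw [if_neg (fun hh => h ((hcond y hy).mp hh)),
          if_neg (fun hh => h (Set.mem_Ioc.mp hh).2)]
    rw [heq, integral_indicator measurableSet_Ioc,
      Measure.restrict_restrict measurableSet_Ioc,
      show Set.Ioc (0:ℝ) c ∩ Set.Ioi 0 = Set.Ioc 0 c by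
        rw [Set.inter_eq_left]; exact Set.Ioc_subset_Ioi_self,
      ← intervalIntegral.integral_of_le (le_of_lt hcpos)]
    have : ∀ y : ℝ, Real.exp (-(x + y)) = Real.exp (-x) * Real.exp (-y) := by
      intro y; rw [← Real.exp_add]; ring_nf
    simp_rw [this]
    rw [intervalIntegral.integral_const_mul]
    have : ∫ y in (0:ℝ)..c, Real.exp (-y) = 1 - Real.exp (-c) := by
      have := intervalIntegral.integral_comp_neg (a := (0:ℝ)) (b := c) (fun y => Real.exp y)
      rw [this, integral_exp]
      simp
    rw [this, mul_sub, mul_one, ← Real.exp_add]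
    congr 1
    rw [hc]; ring
  rw [setIntegral_congr_fun measurableSet_Ioi inner]
  have int1 : IntegrableOn (fun x => Real.exp (-x)) (Set.Ioi (0:ℝ)) := by
    simpa using exp_neg_integrableOn_Ioi 0 one_pos
  have int2 : IntegrableOn (fun x => Real.exp (-(z1 * x + z2))) (Set.Ioi (0:ℝ)) := by
    have : ∀ x : ℝ, Real.exp (-(z1 * x + z2)) = Real.exp (-z2) * Real.exp (-z1 * x) := by
      intro x; rw [← Real.exp_add]; ring_nf
    simp_rw [this]
    exact (exp_neg_integrableOn_Ioi 0 hz1pos).const_mul _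
  rw [integral_sub int1 int2, integral_exp_neg_Ioi_zero]
  have : ∫ x in Set.Ioi (0:ℝ), Real.exp (-(z1 * x + z2))
      = Real.exp (-z2) * ∫ x in Set.Ioi (0:ℝ), Real.exp (-z1 * x) := by
    rw [← integral_const_mul]
    congr 1; ext x; rw [← Real.exp_add]; congr 1; ring
  rw [this]
  have h3 : ∫ x in Set.Ioi (0:ℝ), Real.exp (-z1 * x) = 1 / z1 := by
    have := integral_comp_mul_left_Ioi (fun x => Real.exp (-x)) 0 hz1pos
    simp only [mul_zero, neg_mul] at this ⊢
    rw [this, integral_exp_neg_Ioi_zero, smul_eq_mul, mul_one, one_div]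
  rw [h3]
  ring
end

section
/- Let 0 < β < 1/2 and η > 0. For ρ > 0 define P̄(ρ) = ∫_0^∞ ∫_0^∞ 1{(1 + βρ y/((ρ/η) x + 1))·(1 + βρ y) ≤ 1 + ρ y} · e^{-(x+y)} dy dx, i.e., the FSIC failure probability with ρ_n = ρ and ρ_m = ρ/η. Then P̄(ρ) tends to (1-β)/(β²η + (1-β)) as ρ → ∞. -/
set_option maxHeartbeats 1000000


open MeasureTheory Real Filter

theorem fsic_failure_probability_limit
    (β η : ℝ) (hβ0 : 0 < β) (hβ1 : β < 1/2) (hη : 0 < η) :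
    Tendsto (fun ρ : ℝ =>
        ∫ x in Set.Ioi (0:ℝ), ∫ y in Set.Ioi (0:ℝ),
          (if (1 + β * ρ * y / ((ρ / η) * x + 1)) * (1 + β * ρ * y) ≤ 1 + ρ * y
            then Real.exp (-(x + y)) else 0))
      atTop (nhds ((1 - β) / (β ^ 2 * η + (1 - β)))) := by
  have hβ2 : (0:ℝ) < 1 - 2*β := by linarith
  have hb : (0:ℝ) < 1 - β := by linarith
  set B : ℝ := (1 - β) / (β^2 * η) with hBdef
  have hBpos : 0 < B := div_pos hb (by positivity)
  have h1B : (0:ℝ) < 1 + B := by linarith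
  -- exact value of the double integral for ρ > 0
  have key : ∀ ρ : ℝ, 0 < ρ →
      (∫ x in Set.Ioi (0:ℝ), ∫ y in Set.Ioi (0:ℝ),
          (if (1 + β * ρ * y / ((ρ / η) * x + 1)) * (1 + β * ρ * y) ≤ 1 + ρ * y
            then Real.exp (-(x + y)) else 0))
        = 1 - Real.exp (-((1 - 2*β)/(β^2*ρ))) * (1 + B)⁻¹ := by
    intro ρ hρ
    set A : ℝ := (1 - 2*β)/(β^2*ρ) with hAdef
    have hApos : 0 < A := div_pos hβ2 (by positivity)
    -- inner integral computation
    have inner : Set.EqOn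
        (fun x : ℝ => ∫ y in Set.Ioi (0:ℝ),
          (if (1 + β * ρ * y / ((ρ / η) * x + 1)) * (1 + β * ρ * y) ≤ 1 + ρ * y
            then Real.exp (-(x + y)) else 0))
        (fun x : ℝ => Real.exp (-x) - Real.exp (-A) * Real.exp (-((1+B)*x)))
        (Set.Ioi (0:ℝ)) := by
      intro x hx
      simp only
      rw [Set.mem_Ioi] at hx
      have hD : (0:ℝ) < (ρ / η) * x + 1 := by positivity
      set T : ℝ := A + B * x with hTdef
      have hT : 0 ≤ T := by nlinarith [mul_pos hBpos hx]
      -- condition equivalence for y > 0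
      have hcond : ∀ y : ℝ, 0 < y →
          ((1 + β * ρ * y / ((ρ / η) * x + 1)) * (1 + β * ρ * y) ≤ 1 + ρ * y ↔ y ≤ T) := by
        intro y hy
        have expand : (1 + β * ρ * y / ((ρ / η) * x + 1)) * (1 + β * ρ * y)
            = (((ρ / η) * x + 1 + β * ρ * y) * (1 + β * ρ * y)) / ((ρ / η) * x + 1) := by
          field_simp
        rw [expand, div_le_iff₀ hD, ← sub_nonpos]
        have hfact : ((ρ / η) * x + 1 + β * ρ * y) * (1 + β * ρ * y) - (1 + ρ * y) * ((ρ / η) * x + 1)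
            = (ρ * y * (β^2 * ρ)) * (y - T) := by
          rw [hTdef, hAdef, hBdef]
          field_simp
          ring
        rw [hfact]
        have hc : 0 < ρ * y * (β^2 * ρ) := by positivity
        constructor
        · intro h; nlinarith
        · intro h; nlinarith
      -- rewrite integrand as indicator
      rw [setIntegral_congr_fun measurableSet_Ioi
          (g := fun y => (Set.Iic T).indicator (fun y => Real.exp (-(x+y))) y)
          (fun y hy => by
            rw [Set.mem_Ioi] at hy
            simp only [Set.indicator_apply, Set.mem_Iic]
            exact if_congr (hcond y hy) rfl rfl)]
      rw [setIntegral_indicator measurableSet_Iic]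
      have hset : Set.Ioi (0:ℝ) ∩ Set.Iic T = Set.Ioc 0 T := rfl
      rw [hset, ← intervalIntegral.integral_of_le hT]
      have hsplit : ∀ y : ℝ, Real.exp (-(x+y)) = Real.exp (-x) * Real.exp (-y) := by
        intro y; rw [← Real.exp_add]; ring_nf
      simp_rw [hsplit]
      rw [intervalIntegral.integral_const_mul, intervalIntegral.integral_comp_neg (fun y => Real.exp y),
        integral_exp]
      simp only [neg_zero, Real.exp_zero]
      rw [mul_sub, mul_one, ← Real.exp_add, ← Real.exp_add]
      ring_nf
      rw [hTdef]; ring_nf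
    rw [setIntegral_congr_fun measurableSet_Ioi inner]
    have hi1 : IntegrableOn (fun x : ℝ => Real.exp (-x)) (Set.Ioi (0:ℝ)) := by
      have := exp_neg_integrableOn_Ioi 0 (zero_lt_one (α := ℝ))
      simpa using this
    have hi2 : IntegrableOn (fun x : ℝ => Real.exp (-A) * Real.exp (-((1+B)*x))) (Set.Ioi (0:ℝ)) := by
      have h := (exp_neg_integrableOn_Ioi 0 h1B).const_mul (Real.exp (-A))
      have he : (fun x : ℝ => Real.exp (-A) * Real.exp (-(1+B) * x))
          = fun x : ℝ => Real.exp (-A) * Real.exp (-((1+B)*x)) := by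
        funext x; ring_nf
      rwa [he] at h
    rw [integral_sub hi1 hi2, integral_exp_neg_Ioi_zero, integral_const_mul]
    have hval : ∫ x in Set.Ioi (0:ℝ), Real.exp (-((1+B)*x)) = (1+B)⁻¹ := by
      have := integral_comp_mul_left_Ioi (fun x => Real.exp (-x)) 0 h1B
      simp only [mul_zero, integral_exp_neg_Ioi_zero, smul_eq_mul, mul_one] at this
      exact this
    rw [hval]
  -- the limit
  have hlim : Tendsto (fun ρ : ℝ => 1 - Real.exp (-((1 - 2*β)/(β^2*ρ))) * (1 + B)⁻¹)
      atTop (nhds ((1 - β) / (β ^ 2 * η + (1 - β)))) := by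
    have h0 : Tendsto (fun ρ : ℝ => -((1 - 2*β)/(β^2*ρ))) atTop (nhds 0) := by
      have : Tendsto (fun ρ : ℝ => (1 - 2*β)/(β^2*ρ)) atTop (nhds 0) := by
        have := Tendsto.const_div_atTop (g := fun ρ : ℝ => β^2*ρ) (r := 1 - 2*β)
          (Tendsto.const_mul_atTop (by positivity) tendsto_id)
        simpa using this
      simpa using this.neg
    have hexp : Tendsto (fun ρ : ℝ => Real.exp (-((1 - 2*β)/(β^2*ρ)))) atTop (nhds 1) := by
      have := (Real.continuous_exp.tendsto 0).comp h0
      simpa [Function.comp_def] using this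
    have := (tendsto_const_nhds (x := (1:ℝ))).sub (hexp.mul_const ((1 + B)⁻¹))
    convert this using 2
    rw [one_mul, hBdef]
    have hden : β ^ 2 * η + (1 - β) ≠ 0 := by positivity
    field_simp
    ring
  refine hlim.congr' ?_
  filter_upwards [eventually_gt_atTop (0:ℝ)] with ρ hρ
  exact (key ρ hρ).symm
end

section
/- Let 0 < β < 1/2, ρ_m, ρ_n > 0, α_m > 0 with α_m ρ_m < β/(1-β), and set z1 = 1 + (1-β)ρ_m/(β²ρ_n), z2 = (1-2β)/(β²ρ_n), z4 = 1 + 1/(α_m β ρ_n), z5 = (1-β)/(β/α_m − (1-β)ρ_m), Ψ(x) = ((1-β)(1+ρ_m x) − β)/(β²ρ_n), Φ(x) = (x/α_m − 1)/(βρ_n). Then ∫_{α_m}^{z5} ∫_{Φ(x)}^{Ψ(x)} e^{-(x+y)} dy dx = (1/z4)·e^{1/(βρ_n)}·(e^{-z4 α_m} − e^{-z4 z5}) − (1/z1)·e^{-z2}·(e^{-z1 α_m} − e^{-z1 z5}). -/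
open MeasureTheory Real

lemma exp_neg_add_deriv (c d x : ℝ) (hc : c ≠ 0) :
    HasDerivAt (fun x : ℝ => -(1/c) * Real.exp (-(c * x + d)))
      (Real.exp (-(c * x + d))) x := by
  have h1 : HasDerivAt (fun x : ℝ => -(c * x + d)) (-c) x := by
    have := (((hasDerivAt_id x).const_mul c).add_const d).neg
    simp only [id, mul_one] at this
    exact this
  have h2 := (Real.hasDerivAt_exp (-(c * x + d))).comp x h1
  have h3 := h2.const_mul (-(1/c))
  refine h3.congr_deriv ?_
  have hc' : (1/c) * c = 1 := one_div_mul_cancel hc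
  linear_combination (Real.exp (-(c * x + d))) * hc'

lemma integral_exp_neg_add (c d a b : ℝ) (hc : c ≠ 0) :
    (∫ x in a..b, Real.exp (-(c * x + d)))
      = (1/c) * (Real.exp (-(c * a + d)) - Real.exp (-(c * b + d))) := by
  have := intervalIntegral.integral_eq_sub_of_hasDerivAt
    (a := a) (b := b)
    (f := fun x : ℝ => -(1/c) * Real.exp (-(c * x + d)))
    (f' := fun x => Real.exp (-(c * x + d)))
    (fun x _ => exp_neg_add_deriv c d x hc)
    (by apply Continuous.intervalIntegrable; continuity)
  rw [this]; ring

theorem hsic_npa_P_II1_small_eps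
    (β ρm ρn αm : ℝ) (hβ0 : 0 < β) (hβ1 : β < 1/2)
    (hρm : 0 < ρm) (hρn : 0 < ρn) (hαm : 0 < αm)
    (hε : αm * ρm < β / (1 - β))
    (z1 z2 z4 z5 : ℝ) (Ψ Φ : ℝ → ℝ)
    (hz1 : z1 = 1 + (1 - β) * ρm / (β ^ 2 * ρn))
    (hz2 : z2 = (1 - 2 * β) / (β ^ 2 * ρn))
    (hz4 : z4 = 1 + 1 / (αm * β * ρn))
    (hz5 : z5 = (1 - β) / (β / αm - (1 - β) * ρm))
    (hΨ : ∀ x, Ψ x = ((1 - β) * (1 + ρm * x) - β) / (β ^ 2 * ρn))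
    (hΦ : ∀ x, Φ x = (x / αm - 1) / (β * ρn)) :
    (∫ x in αm..z5, ∫ y in (Φ x)..(Ψ x), Real.exp (-(x + y)))
      = (1 / z4) * Real.exp (1 / (β * ρn))
          * (Real.exp (-(z4 * αm)) - Real.exp (-(z4 * z5)))
        - (1 / z1) * Real.exp (-z2)
          * (Real.exp (-(z1 * αm)) - Real.exp (-(z1 * z5))) := by
  have hβρn : β * ρn ≠ 0 := by positivity
  have hβ2ρn : (β:ℝ) ^ 2 * ρn ≠ 0 := by positivity
  have hαm' : αm ≠ 0 := ne_of_gt hαm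
  have h1β : 0 < 1 - β := by linarith
  have hz1pos : 0 < z1 := by
    rw [hz1]
    have : 0 < (1 - β) * ρm / (β ^ 2 * ρn) := div_pos (mul_pos h1β hρm) (by positivity)
    linarith
  have hz4pos : 0 < z4 := by
    rw [hz4]; positivity
  have hz1' : z1 ≠ 0 := ne_of_gt hz1pos
  have hz4' : z4 ≠ 0 := ne_of_gt hz4pos
  -- inner integral
  have inner : ∀ x : ℝ, (∫ y in (Φ x)..(Ψ x), Real.exp (-(x + y)))
      = Real.exp (-(z4 * x + (-(1/(β*ρn))))) - Real.exp (-(z1 * x + z2)) := by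
    intro x
    have h0 : (∫ y in (Φ x)..(Ψ x), Real.exp (-(x + y)))
        = ∫ y in (Φ x)..(Ψ x), Real.exp (-(1 * y + x)) := by
      congr 1; funext y; congr 1; ring
    rw [h0, integral_exp_neg_add 1 x (Φ x) (Ψ x) one_ne_zero]
    have e1 : 1 * (Φ x) + x = z4 * x + (-(1/(β*ρn))) := by
      rw [hΦ, hz4]; field_simp; ring
    have e2 : 1 * (Ψ x) + x = z1 * x + z2 := by
      rw [hΨ, hz1, hz2]; field_simp; ring
    rw [e1, e2]; ring
  rw [intervalIntegral.integral_congr (fun x _ => inner x)]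
  rw [intervalIntegral.integral_sub
    (by apply Continuous.intervalIntegrable; continuity)
    (by apply Continuous.intervalIntegrable; continuity)]
  rw [integral_exp_neg_add z4 (-(1/(β*ρn))) αm z5 hz4',
      integral_exp_neg_add z1 z2 αm z5 hz1']
  have expand : ∀ c x : ℝ, Real.exp (-(c * x + (-(1/(β*ρn)))))
      = Real.exp (1/(β*ρn)) * Real.exp (-(c * x)) := by
    intro c x; rw [← Real.exp_add]; ring_nf
  have expand2 : ∀ c x : ℝ, Real.exp (-(c * x + z2))
      = Real.exp (-z2) * Real.exp (-(c * x)) := by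
    intro c x; rw [← Real.exp_add]; ring_nf
  rw [expand, expand, expand2, expand2]
  ring
end

section
/- Let 0 < β < 1/2, ρ_m, ρ_n > 0, ε_m > β/(1-β), and α_m = ε_m/ρ_m. Define τ(x) = max{0, x/α_m − 1} and the event E ⊆ [0,∞)² as the union of E_I = {(x,y) : βρ_n y ≤ τ(x) and (1+βρ_n y)² ≤ 1+ρ_n y} and E_II = {(x,y) : βρ_n y > τ(x) and (1 + βρ_n y/(ρ_m x + 1))(1+βρ_n y) ≤ 1+ρ_n y}. With z1 = 1 + (1-β)ρ_m/(β²ρ_n), z2 = (1-2β)/(β²ρ_n), z3 = (1-β)α_m/β, z4 = 1 + 1/(α_m β ρ_n), one has ∫∫_E e^{-(x+y)} dy dx = 1 − e^{-(z2+z3)} + (1/z4)·e^{1/(βρ_n)}·e^{-z3 z4} − (1/z1)·e^{-z2}. -/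
open MeasureTheory Real Filter

private lemma exp_rate_int {b : ℝ} (hb : 0 < b) (s : ℝ) :
    ∫ x in Set.Ioi s, Real.exp (-(b * x)) = Real.exp (-(b * s)) / b := by
  have hderiv : ∀ x ∈ Set.Ici s,
      HasDerivAt (fun x => -Real.exp (-(b*x)) / b) (Real.exp (-(b*x))) x := by
    intro x _
    have h1 : HasDerivAt (fun x : ℝ => -(b*x)) (-b) x := by
      exact (((hasDerivAt_id x).const_mul b).neg).congr_deriv (by ring)
    have h2 := (h1.exp).neg.div_const b
    exact h2.congr_deriv (by rw [mul_neg, neg_neg, mul_div_assoc, div_self hb.ne', mul_one])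
  have hint : IntegrableOn (fun x => Real.exp (-(b*x))) (Set.Ioi s) := by
    simpa [neg_mul] using exp_neg_integrableOn_Ioi s hb
  have htend : Filter.Tendsto (fun x => -Real.exp (-(b*x)) / b) Filter.atTop (nhds 0) := by
    have h1 : Filter.Tendsto (fun x : ℝ => -(b*x)) Filter.atTop Filter.atBot :=
      tendsto_neg_atTop_atBot.comp (Filter.tendsto_id (α := ℝ) |>.const_mul_atTop hb)
    have h2 : Filter.Tendsto (fun x => Real.exp (-(b*x))) Filter.atTop (nhds 0) :=
      Real.tendsto_exp_atBot.comp h1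
    have := (h2.neg).div_const b
    simpa using this
  have := integral_Ioi_of_hasDerivAt_of_tendsto' hderiv hint htend
  rw [this]; field_simp
  ring

private lemma exp_Ioc_int {a b : ℝ} (h : a ≤ b) :
    ∫ y in Set.Ioc a b, Real.exp (-y) = Real.exp (-a) - Real.exp (-b) := by
  rw [← intervalIntegral.integral_of_le h]
  rw [intervalIntegral.integral_comp_neg (fun y => Real.exp y)]
  rw [integral_exp]

set_option maxHeartbeats 1600000 in
theorem hsic_npa_theorem1_large_eps
    (β ρm ρn εm αm : ℝ) (hβ0 : 0 < β) (hβ1 : β < 1/2)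
    (hρm : 0 < ρm) (hρn : 0 < ρn)
    (hε : εm > β / (1 - β)) (hαm : αm = εm / ρm)
    (τ : ℝ → ℝ) (hτ : ∀ x, τ x = max 0 (x / αm - 1))
    (z1 z2 z3 z4 : ℝ)
    (hz1 : z1 = 1 + (1 - β) * ρm / (β ^ 2 * ρn))
    (hz2 : z2 = (1 - 2 * β) / (β ^ 2 * ρn))
    (hz3 : z3 = (1 - β) * αm / β)
    (hz4 : z4 = 1 + 1 / (αm * β * ρn)) :
    (∫ x in Set.Ioi (0:ℝ), ∫ y in Set.Ioi (0:ℝ),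
        (if (β * ρn * y ≤ τ x ∧ (1 + β * ρn * y) ^ 2 ≤ 1 + ρn * y)
            ∨ (β * ρn * y > τ x ∧
                (1 + β * ρn * y / (ρm * x + 1)) * (1 + β * ρn * y) ≤ 1 + ρn * y)
          then Real.exp (-(x + y)) else 0))
      = 1 - Real.exp (-(z2 + z3))
        + (1 / z4) * Real.exp (1 / (β * ρn)) * Real.exp (-(z3 * z4))
        - (1 / z1) * Real.exp (-z2) := by
  have h2β : (0:ℝ) < 1 - 2*β := by linarith
  have h1β : (0:ℝ) < 1 - β := by linarith
  have hε0 : 0 < εm := lt_trans (by positivity) hε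
  have hα : 0 < αm := by rw [hαm]; positivity
  have ha : 0 < β * ρn := by positivity
  have hεβ : β < εm * (1 - β) := by
    have := (div_lt_iff₀ h1β).mp hε; linarith
  have hαρ : αm * ρm = εm := by rw [hαm]; field_simp
  set c : ℝ := (1 - β) * ρm / (β ^ 2 * ρn) with hc
  have hcpos : 0 < c := by positivity
  have hz2p : 0 < z2 := by rw [hz2]; positivity
  have hz3p : 0 < z3 := by rw [hz3]; positivity
  have hz1p : 0 < z1 := by rw [hz1]; positivity
  have hz4p : 0 < z4 := by rw [hz4]; positivity
  have haz2 : β * ρn * z2 = (1 - 2*β)/β := by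
    rw [hz2]; field_simp
  have h1ltb : (1:ℝ) < (1 - β)/β := by
    rw [lt_div_iff₀ hβ0]; linarith
  -- inner integral computation
  have hinner : ∀ x ∈ Set.Ioi (0:ℝ),
      (∫ y in Set.Ioi (0:ℝ),
        (if (β * ρn * y ≤ τ x ∧ (1 + β * ρn * y) ^ 2 ≤ 1 + ρn * y)
            ∨ (β * ρn * y > τ x ∧
                (1 + β * ρn * y / (ρm * x + 1)) * (1 + β * ρn * y) ≤ 1 + ρn * y)
          then Real.exp (-(x + y)) else 0))
      = (Real.exp (-x) - Real.exp (-z2) * Real.exp (-(z1*x)))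
          + Set.indicator (Set.Ioi z3)
              (fun x => Real.exp (1/(β*ρn)) * Real.exp (-(z4*x))
                - Real.exp (-z2) * Real.exp (-x)) x := by
    intro x hx
    rw [Set.mem_Ioi] at hx
    have hP : 0 < ρm * x + 1 := by positivity
    have e1 : ∀ y : ℝ, 0 < y → ((1 + β * ρn * y) ^ 2 ≤ 1 + ρn * y ↔ y ≤ z2) := by
      intro y hy
      rw [hz2, le_div_iff₀ (by positivity)]
      constructor
      · intro h; nlinarith [mul_pos hρn hy]
      · intro h; nlinarith [mul_pos hρn hy]
    have hq : z2 + c * x = ((1 - 2*β) + (1 - β) * ρm * x) / (β^2 * ρn) := by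
      rw [hz2, hc]; field_simp
    have e2 : ∀ y : ℝ, 0 < y →
        ((1 + β * ρn * y / (ρm * x + 1)) * (1 + β * ρn * y) ≤ 1 + ρn * y
          ↔ y ≤ z2 + c * x) := by
      intro y hy
      rw [hq, le_div_iff₀ (by positivity)]
      rw [show (1 + β * ρn * y / (ρm * x + 1)) = ((ρm * x + 1) + β * ρn * y)/(ρm * x + 1) by
        field_simp]
      rw [div_mul_eq_mul_div, div_le_iff₀ hP]
      constructor
      · intro h; nlinarith [mul_pos hρn hy, mul_pos (mul_pos hρn hy) hP]
      · intro h; nlinarith [mul_pos hρn hy, mul_pos (mul_pos hρn hy) hP,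
          mul_nonneg (mul_pos hρn hy).le hP.le]
    have hEU : Real.exp (-x) * Real.exp (-(z2 + c * x))
        = Real.exp (-z2) * Real.exp (-(z1*x)) := by
      rw [← Real.exp_add, ← Real.exp_add]
      congr 1
      rw [hz1]; ring
    by_cases hx3 : z3 < x
    · -- large x : set is Ioc 0 z2 ∪ Ioc T u
      have hx_div : (1 - β)/β < x / αm := by
        rw [div_lt_div_iff₀ hβ0 hα]
        rw [hz3, div_lt_iff₀ hβ0] at hx3
        linarith
      have hτx : τ x = x / αm - 1 := by
        rw [hτ, max_eq_right]
        linarith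
      set T : ℝ := (x / αm - 1) / (β * ρn) with hT
      have haT : β * ρn * T = x / αm - 1 := by
        rw [hT]; field_simp
      have h2 : (1 - 2*β)/β = (1-β)/β - 1 := by field_simp; ring
      have hz2T : z2 < T := by
        rw [hT, lt_div_iff₀ ha, show z2*(β*ρn) = β*ρn*z2 by ring, haz2, h2]
        linarith
      have h6 : x/αm * β ≤ (1-β)*ρm*x := by
        rw [div_mul_eq_mul_div, div_le_iff₀ hα]
        have h7 : (1-β)*ρm*x*αm = (1-β)*εm*x := by rw [← hαρ]; ring
        rw [h7]
        nlinarith [mul_pos hx (sub_pos.mpr hεβ)]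
      have hTu : T ≤ z2 + c * x := by
        rw [hT, div_le_iff₀ ha]
        have hexp : (z2 + c * x) * (β * ρn) = ((1 - 2*β) + (1 - β) * ρm * x)/β := by
          rw [hz2, hc]; field_simp
        rw [hexp, le_div_iff₀ hβ0, sub_mul, one_mul]
        linarith
      set u : ℝ := z2 + c * x with hu
      have hset : ∀ y ∈ Set.Ioi (0:ℝ),
          (if (β * ρn * y ≤ τ x ∧ (1 + β * ρn * y) ^ 2 ≤ 1 + ρn * y)
            ∨ (β * ρn * y > τ x ∧
                (1 + β * ρn * y / (ρm * x + 1)) * (1 + β * ρn * y) ≤ 1 + ρn * y)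
          then Real.exp (-(x + y)) else 0)
          = Set.indicator (Set.Ioc 0 z2 ∪ Set.Ioc T u)
              (fun y => Real.exp (-x) * Real.exp (-y)) y := by
        intro y hy
        rw [Set.mem_Ioi] at hy
        have hcnd : ((β * ρn * y ≤ τ x ∧ (1 + β * ρn * y) ^ 2 ≤ 1 + ρn * y)
            ∨ (β * ρn * y > τ x ∧
                (1 + β * ρn * y / (ρm * x + 1)) * (1 + β * ρn * y) ≤ 1 + ρn * y))
            ↔ y ∈ Set.Ioc 0 z2 ∪ Set.Ioc T u := by
          rw [e1 y hy, e2 y hy]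
          simp only [Set.mem_union, Set.mem_Ioc]
          constructor
          · rintro (⟨h1, h2'⟩ | ⟨h1, h2'⟩)
            · exact Or.inl ⟨hy, h2'⟩
            · refine Or.inr ⟨?_, h2'⟩
              rw [hτx, ← haT] at h1
              exact lt_of_mul_lt_mul_left h1 ha.le
          · rintro (⟨h1, h2'⟩ | ⟨h1, h2'⟩)
            · refine Or.inl ⟨?_, h2'⟩
              rw [hτx, ← haT]
              have hyT : y < T := lt_of_le_of_lt h2' hz2T
              exact (mul_le_mul_iff_right₀ ha).mpr hyT.le
            · refine Or.inr ⟨?_, h2'⟩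
              rw [hτx, ← haT]
              exact (mul_lt_mul_iff_right₀ ha).mpr h1
        by_cases h : y ∈ Set.Ioc 0 z2 ∪ Set.Ioc T u
        · rw [if_pos (hcnd.mpr h), Set.indicator_of_mem h, ← Real.exp_add]
          ring_nf
        · rw [if_neg (fun hc' => h (hcnd.mp hc')), Set.indicator_of_notMem h]
      rw [setIntegral_congr_fun measurableSet_Ioi hset]
      rw [setIntegral_indicator (measurableSet_Ioc.union measurableSet_Ioc)]
      have hinter : Set.Ioi (0:ℝ) ∩ (Set.Ioc 0 z2 ∪ Set.Ioc T u)
          = Set.Ioc 0 z2 ∪ Set.Ioc T u := by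
        apply Set.inter_eq_self_of_subset_right
        rintro y (hy | hy)
        · exact hy.1
        · exact lt_trans (lt_trans hz2p hz2T) hy.1
      rw [hinter]
      have hdisj : Disjoint (Set.Ioc 0 z2) (Set.Ioc T u) := by
        rw [Set.disjoint_left]
        rintro y ⟨_, h2'⟩ ⟨h3', _⟩
        linarith
      have hcont : Continuous (fun y : ℝ => Real.exp (-x) * Real.exp (-y)) :=
        continuous_const.mul (Real.continuous_exp.comp continuous_neg)
      rw [setIntegral_union hdisj measurableSet_Ioc
        (hcont.integrableOn_Ioc) (hcont.integrableOn_Ioc)]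
      rw [integral_const_mul, integral_const_mul, exp_Ioc_int hz2p.le, exp_Ioc_int hTu]
      rw [Set.indicator_of_mem (Set.mem_Ioi.mpr hx3)]
      have hET : Real.exp (-x) * Real.exp (-T)
          = Real.exp (1/(β*ρn)) * Real.exp (-(z4*x)) := by
        rw [← Real.exp_add, ← Real.exp_add]
        congr 1
        rw [hT, hz4]
        field_simp
        ring
      simp only [neg_zero, Real.exp_zero]
      linear_combination hET - hEU
    · -- small x : set is Ioc 0 u
      push_neg at hx3
      have hτz2 : τ x ≤ β * ρn * z2 := by
        rw [hτ, haz2]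
        apply max_le (by positivity)
        have h5 : x/αm ≤ (1-β)/β := by
          rw [div_le_div_iff₀ hα hβ0]
          rw [hz3, le_div_iff₀ hβ0] at hx3
          linarith
        have h2 : (1 - 2*β)/β = (1-β)/β - 1 := by field_simp; ring
        rw [h2]
        linarith
      set u : ℝ := z2 + c * x with hu
      have hz2u : z2 ≤ u := by
        rw [hu]; nlinarith [mul_pos hcpos hx]
      have hset : ∀ y ∈ Set.Ioi (0:ℝ),
          (if (β * ρn * y ≤ τ x ∧ (1 + β * ρn * y) ^ 2 ≤ 1 + ρn * y)
            ∨ (β * ρn * y > τ x ∧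
                (1 + β * ρn * y / (ρm * x + 1)) * (1 + β * ρn * y) ≤ 1 + ρn * y)
          then Real.exp (-(x + y)) else 0)
          = Set.indicator (Set.Ioc 0 u)
              (fun y => Real.exp (-x) * Real.exp (-y)) y := by
        intro y hy
        rw [Set.mem_Ioi] at hy
        have hcnd : ((β * ρn * y ≤ τ x ∧ (1 + β * ρn * y) ^ 2 ≤ 1 + ρn * y)
            ∨ (β * ρn * y > τ x ∧
                (1 + β * ρn * y / (ρm * x + 1)) * (1 + β * ρn * y) ≤ 1 + ρn * y))
            ↔ y ∈ Set.Ioc 0 u := by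
          rw [e1 y hy, e2 y hy]
          simp only [Set.mem_Ioc]
          constructor
          · rintro (⟨h1, h2'⟩ | ⟨h1, h2'⟩)
            · exact ⟨hy, le_trans h2' hz2u⟩
            · exact ⟨hy, h2'⟩
          · rintro ⟨h1, h2'⟩
            rcases le_or_gt (β * ρn * y) (τ x) with h | h
            · refine Or.inl ⟨h, ?_⟩
              have : β * ρn * y ≤ β * ρn * z2 := le_trans h hτz2
              exact le_of_mul_le_mul_left this ha
            · exact Or.inr ⟨h, h2'⟩
        by_cases h : y ∈ Set.Ioc 0 u
        · rw [if_pos (hcnd.mpr h), Set.indicator_of_mem h, ← Real.exp_add]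
          ring_nf
        · rw [if_neg (fun hc' => h (hcnd.mp hc')), Set.indicator_of_notMem h]
      rw [setIntegral_congr_fun measurableSet_Ioi hset]
      rw [setIntegral_indicator measurableSet_Ioc]
      rw [Set.inter_eq_self_of_subset_right Set.Ioc_subset_Ioi_self]
      rw [integral_const_mul, exp_Ioc_int (le_trans hz2p.le hz2u)]
      rw [Set.indicator_of_notMem (by rw [Set.mem_Ioi]; exact not_lt.mpr hx3)]
      simp only [neg_zero, Real.exp_zero]
      linear_combination -hEU
  -- outer integral
  rw [setIntegral_congr_fun measurableSet_Ioi hinner]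
  have i1 : IntegrableOn (fun x : ℝ => Real.exp (-x)) (Set.Ioi (0:ℝ)) := by
    simpa using exp_neg_integrableOn_Ioi (0:ℝ) one_pos
  have i2 : IntegrableOn (fun x : ℝ => Real.exp (-z2) * Real.exp (-(z1*x)))
      (Set.Ioi (0:ℝ)) := by
    have := exp_neg_integrableOn_Ioi (0:ℝ) hz1p
    simpa [neg_mul, IntegrableOn] using this.const_mul (Real.exp (-z2))
  have i3a : IntegrableOn (fun x : ℝ => Real.exp (1/(β*ρn)) * Real.exp (-(z4*x)))
      (Set.Ioi z3) := by
    have := exp_neg_integrableOn_Ioi z3 hz4p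
    simpa [neg_mul, IntegrableOn] using this.const_mul (Real.exp (1/(β*ρn)))
  have i3b : IntegrableOn (fun x : ℝ => Real.exp (-z2) * Real.exp (-x)) (Set.Ioi z3) := by
    have := exp_neg_integrableOn_Ioi z3 one_pos
    simpa [neg_mul, IntegrableOn] using this.const_mul (Real.exp (-z2))
  have i3 : IntegrableOn (fun x : ℝ => Real.exp (1/(β*ρn)) * Real.exp (-(z4*x))
      - Real.exp (-z2) * Real.exp (-x)) (Set.Ioi z3) := i3a.sub i3b
  have i4 : Integrable (Set.indicator (Set.Ioi z3)
      (fun x : ℝ => Real.exp (1/(β*ρn)) * Real.exp (-(z4*x))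
        - Real.exp (-z2) * Real.exp (-x))) (volume.restrict (Set.Ioi (0:ℝ))) := by
    rw [integrable_indicator_iff measurableSet_Ioi]
    rw [IntegrableOn, Measure.restrict_restrict measurableSet_Ioi, Set.Ioi_inter_Ioi,
      show z3 ⊔ (0:ℝ) = z3 from sup_eq_left.mpr hz3p.le]
    exact i3
  have i12 : IntegrableOn (fun x : ℝ => Real.exp (-x) - Real.exp (-z2) * Real.exp (-(z1*x)))
      (Set.Ioi (0:ℝ)) := i1.sub i2
  rw [integral_add i12 i4]
  rw [integral_sub i1 i2, integral_const_mul]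
  rw [setIntegral_indicator measurableSet_Ioi]
  rw [Set.Ioi_inter_Ioi, show (0:ℝ) ⊔ z3 = z3 from sup_eq_right.mpr hz3p.le]
  rw [integral_sub i3a i3b, integral_const_mul, integral_const_mul]
  rw [integral_exp_neg_Ioi_zero, exp_rate_int hz1p, exp_rate_int hz4p, integral_exp_neg_Ioi]
  have hsplit : Real.exp (-(z2+z3)) = Real.exp (-z2) * Real.exp (-z3) := by
    rw [← Real.exp_add]; ring_nf
  rw [hsplit, show z3 * z4 = z4 * z3 by ring]
  simp only [mul_zero, neg_zero, Real.exp_zero]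
  ring
end

section
/- Let 0 < β < 1/2, ρ_m, ρ_n > 0, 0 < ε_m < β/(1-β), and α_m = ε_m/ρ_m. Define τ(x) = max{0, x/α_m − 1} and the event E ⊆ [0,∞)² as the union of E_I = {(x,y) : βρ_n y ≤ τ(x) and (1+βρ_n y)² ≤ 1+ρ_n y} and E_II = {(x,y) : βρ_n y > τ(x) and (1 + βρ_n y/(ρ_m x + 1))(1+βρ_n y) ≤ 1+ρ_n y}. With z1 = 1 + (1-β)ρ_m/(β²ρ_n), z2 = (1-2β)/(β²ρ_n), z3 = (1-β)α_m/β, z4 = 1 + 1/(α_m β ρ_n), z5 = (1-β)/(β/α_m − (1-β)ρ_m), and V = 1 − e^{-(z2+z3)} + (1/z4)·e^{1/(βρ_n)}·e^{-z3 z4} − (1/z1)·e^{-z2}, one has ∫∫_E e^{-(x+y)} dy dx = V − (1/z4)·e^{1/(βρ_n) − z4 z5} + (1/z1)·e^{-(z2 + z1 z5)}. -/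
open MeasureTheory Real

lemma expInt {c : ℝ} (hc : 0 < c) {a b : ℝ} (hab : a ≤ b) (d : ℝ) :
    ∫ x in Set.Ioc a b, Real.exp (d - c * x)
      = (Real.exp (d - c * a) - Real.exp (d - c * b)) / c := by
  rw [← intervalIntegral.integral_of_le hab]
  have h : ∀ x ∈ Set.uIcc a b,
      HasDerivAt (fun x => -Real.exp (d - c * x) / c) (Real.exp (d - c * x)) x := by
    intro x _
    have h1 : HasDerivAt (fun x : ℝ => d - c * x) (-c) x := by
      simpa using ((hasDerivAt_id x).const_mul c).const_sub d
    have h2 := (h1.exp.neg.div_const c)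
    convert h2 using 1
    · rfl
    · rfl
    · rfl
    · rw [eq_div_iff hc.ne']; ring
  rw [intervalIntegral.integral_eq_sub_of_hasDerivAt h
    ((continuous_const.sub (continuous_const.mul continuous_id)).rexp.intervalIntegrable a b)]
  field_simp
  ring

lemma expInt2 (x : ℝ) {a b : ℝ} (hab : a ≤ b) :
    ∫ y in Set.Ioc a b, Real.exp (-(x + y))
      = Real.exp (-(x + a)) - Real.exp (-(x + b)) := by
  have e : ∀ y : ℝ, Real.exp (-(x + y)) = Real.exp (-x - 1 * y) := by
    intro y; ring_nf
  simp only [e]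
  rw [expInt one_pos hab (-x)]
  ring_nf

lemma innerA (x : ℝ) {b : ℝ} (hb : 0 ≤ b) :
    ∫ y in Set.Ioi (0:ℝ), Set.indicator (Set.Ioc 0 b) (fun y => Real.exp (-(x+y))) y
      = Real.exp (-x) - Real.exp (-(x+b)) := by
  rw [setIntegral_indicator measurableSet_Ioc,
    Set.inter_eq_self_of_subset_right Set.Ioc_subset_Ioi_self, expInt2 x hb]
  simp

lemma innerB (x : ℝ) {z t g : ℝ} (hz : 0 ≤ z) (hzt : z ≤ t) (htg : t ≤ g) :
    ∫ y in Set.Ioi (0:ℝ),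
        Set.indicator (Set.Ioc 0 z ∪ Set.Ioc t g) (fun y => Real.exp (-(x+y))) y
      = (Real.exp (-x) - Real.exp (-(x+z)))
        + (Real.exp (-(x+t)) - Real.exp (-(x+g))) := by
  rw [setIntegral_indicator (measurableSet_Ioc.union measurableSet_Ioc)]
  have hsub : Set.Ioc 0 z ∪ Set.Ioc t g ⊆ Set.Ioi 0 := by
    apply Set.union_subset Set.Ioc_subset_Ioi_self
    intro y hy
    exact lt_of_le_of_lt (hz.trans hzt) hy.1
  rw [Set.inter_eq_self_of_subset_right hsub]
  have hdisj : Disjoint (Set.Ioc (0:ℝ) z) (Set.Ioc t g) := by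
    rw [Set.Ioc_disjoint_Ioc]
    exact le_trans (min_le_left _ _) (hzt.trans (le_max_right _ _))
  have hcont : Continuous fun y : ℝ => Real.exp (-(x+y)) := by fun_prop
  rw [setIntegral_union hdisj measurableSet_Ioc
    hcont.integrableOn_Ioc hcont.integrableOn_Ioc,
    expInt2 x hz, expInt2 x htg]
  simp

set_option maxHeartbeats 4000000 in
theorem hsic_npa_theorem1_small_eps
    (β ρm ρn εm αm : ℝ) (hβ0 : 0 < β) (hβ1 : β < 1/2)
    (hρm : 0 < ρm) (hρn : 0 < ρn)
    (hε0 : 0 < εm) (hε : εm < β / (1 - β)) (hαm : αm = εm / ρm)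
    (τ : ℝ → ℝ) (hτ : ∀ x, τ x = max 0 (x / αm - 1))
    (z1 z2 z3 z4 z5 V : ℝ)
    (hz1 : z1 = 1 + (1 - β) * ρm / (β ^ 2 * ρn))
    (hz2 : z2 = (1 - 2 * β) / (β ^ 2 * ρn))
    (hz3 : z3 = (1 - β) * αm / β)
    (hz4 : z4 = 1 + 1 / (αm * β * ρn))
    (hz5 : z5 = (1 - β) / (β / αm - (1 - β) * ρm))
    (hV : V = 1 - Real.exp (-(z2 + z3))
        + (1 / z4) * Real.exp (1 / (β * ρn)) * Real.exp (-(z3 * z4))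
        - (1 / z1) * Real.exp (-z2)) :
    (∫ x in Set.Ioi (0:ℝ), ∫ y in Set.Ioi (0:ℝ),
        (if (β * ρn * y ≤ τ x ∧ (1 + β * ρn * y) ^ 2 ≤ 1 + ρn * y)
            ∨ (β * ρn * y > τ x ∧
                (1 + β * ρn * y / (ρm * x + 1)) * (1 + β * ρn * y) ≤ 1 + ρn * y)
          then Real.exp (-(x + y)) else 0))
      = V - (1 / z4) * Real.exp (1 / (β * ρn) - z4 * z5)
        + (1 / z1) * Real.exp (-(z2 + z1 * z5)) := by
  -- basic positivity facts
  have h1β : 0 < 1 - β := by linarith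
  have hαm0 : 0 < αm := by rw [hαm]; positivity
  have hβρn : 0 < β * ρn := mul_pos hβ0 hρn
  have hβ2ρn : 0 < β ^ 2 * ρn := by positivity
  have hεβ : εm * (1 - β) < β := by
    have := (lt_div_iff₀ h1β).mp hε; linarith
  have hD : 0 < β / αm - (1 - β) * ρm := by
    rw [hαm, div_div_eq_mul_div, sub_pos, lt_div_iff₀ hε0]
    nlinarith
  have hz2pos : 0 < z2 := by
    rw [hz2]; apply div_pos (by linarith) hβ2ρn
  have hz3pos : 0 < z3 := by rw [hz3]; positivity
  have hz5pos : 0 < z5 := by rw [hz5]; exact div_pos h1β hD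
  have hz1gt : 1 < z1 := by
    rw [hz1]
    have : 0 < (1 - β) * ρm / (β ^ 2 * ρn) := by positivity
    linarith
  have hz4gt : 1 < z4 := by
    rw [hz4]
    have : 0 < 1 / (αm * β * ρn) := by positivity
    linarith
  have hz1pos : 0 < z1 := by linarith
  have hz4pos : 0 < z4 := by linarith
  have hz35 : z3 ≤ z5 := by
    rw [hz3, hz5, div_le_div_iff₀ hβ0 hD]
    have key : αm * (β / αm) = β := by field_simp
    nlinarith [mul_pos hαm0 (mul_pos h1β hρm)]
  -- key algebraic identities
  have hβne : (β:ℝ) ≠ 0 := ne_of_gt hβ0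
  have hρnne : (ρn:ℝ) ≠ 0 := ne_of_gt hρn
  have hαmne : (αm:ℝ) ≠ 0 := ne_of_gt hαm0
  have hDne : β / αm - (1 - β) * ρm ≠ 0 := ne_of_gt hD
  have htmul : ∀ x : ℝ, β * ρn * ((z4 - 1) * x - 1 / (β * ρn)) = x / αm - 1 := by
    intro x; rw [hz4]; field_simp; ring
  have hkey3 : (z4 - 1) * z3 - 1 / (β * ρn) = z2 := by
    rw [hz4, hz3, hz2]; field_simp; ring
  have hD2 : 0 < β - (1 - β) * ρm * αm := by
    have h := mul_pos hD hαm0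
    rw [sub_mul, div_mul_cancel₀ _ hαmne] at h
    nlinarith [h]
  have hDX : (β / αm - (1 - β) * ρm) * αm = β - (1 - β) * ρm * αm := by
    rw [sub_mul, div_mul_cancel₀ _ hαmne]
  have c5 : z5 * (β - (1 - β) * ρm * αm) = (1 - β) * αm := by
    rw [hz5, ← hDX, div_mul_eq_mul_div, mul_comm (β / αm - (1 - β) * ρm) αm,
      ← mul_assoc, mul_div_assoc, div_self hDne, mul_one]
  have hv4 : z4 - 1 = 1 / (αm * β * ρn) := by rw [hz4]; ring
  have hv1 : z1 - 1 = (1 - β) * ρm / (β ^ 2 * ρn) := by rw [hz1]; ring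
  have p4 : (z4 - 1) * (αm * β * ρn) = 1 := by rw [hz4]; field_simp; ring
  have p1 : (z1 - 1) * (β ^ 2 * ρn) = (1 - β) * ρm := by rw [hz1]; field_simp; ring
  have p2 : z2 * (β ^ 2 * ρn) = 1 - 2 * β := by rw [hz2]; field_simp
  have p6 : (1 / (β * ρn)) * (β * ρn) = 1 := by field_simp
  have hkey5 : (z4 - 1) * z5 - 1 / (β * ρn) = z2 + (z1 - 1) * z5 := by
    refine mul_right_cancel₀ (show αm * β ^ 2 * ρn ≠ 0 by positivity) ?_
    linear_combination (β * z5) * p4 - (αm * β) * p6 - αm * p2 - (αm * z5) * p1 + c5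
  have hslope : z1 ≤ z4 := by
    rw [hz1, hz4, add_le_add_iff_left, div_le_div_iff₀ hβ2ρn (by positivity)]
    have key : αm * (β / αm) = β := by field_simp
    nlinarith [mul_pos hαm0 hD, mul_pos hβ0 hρn]
  -- t x ≤ z2 for x ≤ z3 ; z2 ≤ t x for z3 ≤ x ; t x ≤ g x etc.
  have ht_le_z2 : ∀ x : ℝ, x ≤ z3 → (z4 - 1) * x - 1 / (β * ρn) ≤ z2 := by
    intro x hx
    nlinarith [mul_le_mul_of_nonneg_left hx (by linarith : (0:ℝ) ≤ z4 - 1)]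
  have hz2_le_t : ∀ x : ℝ, z3 ≤ x → z2 ≤ (z4 - 1) * x - 1 / (β * ρn) := by
    intro x hx
    nlinarith [mul_le_mul_of_nonneg_left hx (by linarith : (0:ℝ) ≤ z4 - 1)]
  have ht_le_g : ∀ x : ℝ, x ≤ z5 →
      (z4 - 1) * x - 1 / (β * ρn) ≤ z2 + (z1 - 1) * x := by
    intro x hx
    nlinarith [mul_le_mul_of_nonneg_left hx (by linarith : (0:ℝ) ≤ z4 - z1)]
  have hg_le_t : ∀ x : ℝ, z5 ≤ x →
      z2 + (z1 - 1) * x ≤ (z4 - 1) * x - 1 / (β * ρn) := by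
    intro x hx
    nlinarith [mul_le_mul_of_nonneg_left hx (by linarith : (0:ℝ) ≤ z4 - z1)]
  have hgnn : ∀ x : ℝ, 0 ≤ x → 0 ≤ z2 + (z1 - 1) * x := by
    intro x hx
    nlinarith [mul_le_mul_of_nonneg_left hx (by linarith : (0:ℝ) ≤ z1 - 1)]
  -- squared-condition equivalence
  have hsq : ∀ y : ℝ, 0 < y → ((1 + β * ρn * y) ^ 2 ≤ 1 + ρn * y ↔ y ≤ z2) := by
    intro y hy
    rw [hz2, le_div_iff₀ hβ2ρn]
    constructor <;> intro h <;> nlinarith [mul_pos hρn hy, mul_pos hβρn hy]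
  -- product-condition equivalence
  have hprod : ∀ x y : ℝ, 0 < x → 0 < y →
      ((1 + β * ρn * y / (ρm * x + 1)) * (1 + β * ρn * y) ≤ 1 + ρn * y
        ↔ y ≤ z2 + (z1 - 1) * x) := by
    intro x y hx hy
    have hc : 0 < ρm * x + 1 := by positivity
    have hgle : (y ≤ z2 + (z1 - 1) * x ↔
        β ^ 2 * ρn * y ≤ (1 - 2 * β) + (1 - β) * ρm * x) := by
      have hBB : β ^ 2 * ρn * z2 = 1 - 2 * β := by rw [hz2]; field_simp
      have hBB1 : β ^ 2 * ρn * (z1 - 1) = (1 - β) * ρm := by rw [hz1]; field_simp; ring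
      constructor <;> intro h <;> nlinarith [mul_le_mul_of_nonneg_left h hβ2ρn.le]
    rw [hgle]
    have key : (1 + β * ρn * y / (ρm * x + 1)) * (1 + β * ρn * y)
        = ((ρm * x + 1) + β * ρn * y) * (1 + β * ρn * y) / (ρm * x + 1) := by
      field_simp
    rw [key, div_le_iff₀ hc]
    constructor <;> intro h <;>
      nlinarith [mul_pos hβρn hy, mul_pos hρn hy, mul_pos (mul_pos hβρn hy) hc,
        mul_pos hβ0 (mul_pos hρn hy)]
  -- τ facts
  have hταm : ∀ x : ℝ, x ≤ αm → τ x = 0 := by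
    intro x hx; rw [hτ x, max_eq_left]
    rw [sub_nonpos, div_le_one hαm0]; exact hx
  have hτgt : ∀ x : ℝ, αm < x → τ x = x / αm - 1 := by
    intro x hx; rw [hτ x, max_eq_right]
    rw [sub_nonneg, le_div_iff₀ hαm0, one_mul]; exact hx.le
  have hαz3 : αm < z3 := by
    rw [hz3, lt_div_iff₀ hβ0]; nlinarith
  -- region 1 inner integral
  have eq1 : ∀ x ∈ Set.Ioc (0:ℝ) z3,
      (∫ y in Set.Ioi (0:ℝ), (if ((β * ρn * y ≤ τ x ∧ (1 + β * ρn * y) ^ 2 ≤ 1 + ρn * y)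
            ∨ (β * ρn * y > τ x ∧
                (1 + β * ρn * y / (ρm * x + 1)) * (1 + β * ρn * y) ≤ 1 + ρn * y)) then Real.exp (-(x + y)) else 0))
        = Real.exp (-x) - Real.exp (-z2 - z1 * x) := by
    intro x hx
    obtain ⟨hx0, hxz3⟩ := hx
    have hEq : Set.EqOn (fun y : ℝ =>
        (if ((β * ρn * y ≤ τ x ∧ (1 + β * ρn * y) ^ 2 ≤ 1 + ρn * y)
            ∨ (β * ρn * y > τ x ∧
                (1 + β * ρn * y / (ρm * x + 1)) * (1 + β * ρn * y) ≤ 1 + ρn * y)) then Real.exp (-(x + y)) else 0))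
        (fun y : ℝ => Set.indicator (Set.Ioc 0 (z2 + (z1 - 1) * x))
              (fun y => Real.exp (-(x + y))) y) (Set.Ioi 0) := by
      intro y hy
      dsimp only
      have hy0 : 0 < y := hy
      by_cases hPxy : ((β * ρn * y ≤ τ x ∧ (1 + β * ρn * y) ^ 2 ≤ 1 + ρn * y)
            ∨ (β * ρn * y > τ x ∧
                (1 + β * ρn * y / (ρm * x + 1)) * (1 + β * ρn * y) ≤ 1 + ρn * y))
      · have hyg : y ≤ z2 + (z1 - 1) * x := by
          rcases hPxy with ⟨_, hsqc⟩ | ⟨_, hpc⟩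
          · have := (hsq y hy0).mp hsqc
            nlinarith [mul_le_mul_of_nonneg_left hx0.le (by linarith : (0:ℝ) ≤ z1 - 1)]
          · exact (hprod x y hx0 hy0).mp hpc
        rw [if_pos hPxy, Set.indicator_of_mem (Set.mem_Ioc.mpr ⟨hy0, hyg⟩)]
      · rw [if_neg hPxy, Set.indicator_of_notMem]
        rintro ⟨_, hyg⟩
        apply hPxy
        by_cases hxy : β * ρn * y ≤ τ x
        · left
          refine ⟨hxy, (hsq y hy0).mpr ?_⟩
          have hτpos : 0 < τ x := lt_of_lt_of_le (by positivity) hxy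
          have hxαm : αm < x := by
            by_contra hcon
            rw [hταm x (not_lt.mp hcon)] at hτpos; linarith
          rw [hτgt x hxαm, ← htmul x] at hxy
          have hyt : y ≤ (z4 - 1) * x - 1 / (β * ρn) :=
            le_of_mul_le_mul_left hxy hβρn
          linarith [ht_le_z2 x hxz3]
        · right
          exact ⟨not_le.mp hxy, (hprod x y hx0 hy0).mpr hyg⟩
    rw [setIntegral_congr_fun measurableSet_Ioi hEq,
      innerA x (hgnn x hx0.le)]
    congr 1
    ring_nf
  -- region 2 inner integral
  have eq2 : ∀ x ∈ Set.Ioc z3 z5,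
      (∫ y in Set.Ioi (0:ℝ), (if ((β * ρn * y ≤ τ x ∧ (1 + β * ρn * y) ^ 2 ≤ 1 + ρn * y)
            ∨ (β * ρn * y > τ x ∧
                (1 + β * ρn * y / (ρm * x + 1)) * (1 + β * ρn * y) ≤ 1 + ρn * y)) then Real.exp (-(x + y)) else 0))
        = Real.exp (-x) - Real.exp (-z2 - x)
          + (Real.exp (1 / (β * ρn) - z4 * x) - Real.exp (-z2 - z1 * x)) := by
    intro x hx
    obtain ⟨hxz3, hxz5⟩ := hx
    have hx0 : 0 < x := lt_trans hz3pos hxz3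
    have hxαm : αm < x := lt_trans hαz3 hxz3
    have hτx : τ x = x / αm - 1 := hτgt x hxαm
    have hτt : τ x = β * ρn * ((z4 - 1) * x - 1 / (β * ρn)) := by
      rw [hτx, htmul]
    have hz2t : z2 ≤ (z4 - 1) * x - 1 / (β * ρn) := hz2_le_t x hxz3.le
    have htg : (z4 - 1) * x - 1 / (β * ρn) ≤ z2 + (z1 - 1) * x := ht_le_g x hxz5
    have hEq : Set.EqOn (fun y : ℝ =>
        (if ((β * ρn * y ≤ τ x ∧ (1 + β * ρn * y) ^ 2 ≤ 1 + ρn * y)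
            ∨ (β * ρn * y > τ x ∧
                (1 + β * ρn * y / (ρm * x + 1)) * (1 + β * ρn * y) ≤ 1 + ρn * y)) then Real.exp (-(x + y)) else 0))
        (fun y : ℝ => Set.indicator (Set.Ioc 0 z2 ∪
              Set.Ioc ((z4 - 1) * x - 1 / (β * ρn)) (z2 + (z1 - 1) * x))
              (fun y => Real.exp (-(x + y))) y) (Set.Ioi 0) := by
      intro y hy
      dsimp only
      have hy0 : 0 < y := hy
      by_cases hPxy : ((β * ρn * y ≤ τ x ∧ (1 + β * ρn * y) ^ 2 ≤ 1 + ρn * y)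
            ∨ (β * ρn * y > τ x ∧
                (1 + β * ρn * y / (ρm * x + 1)) * (1 + β * ρn * y) ≤ 1 + ρn * y))
      · have hymem : y ∈ Set.Ioc (0:ℝ) z2 ∪
            Set.Ioc ((z4 - 1) * x - 1 / (β * ρn)) (z2 + (z1 - 1) * x) := by
          rcases hPxy with ⟨_, hsqc⟩ | ⟨hgt, hpc⟩
          · exact Set.mem_union_left _ (Set.mem_Ioc.mpr ⟨hy0, (hsq y hy0).mp hsqc⟩)
          · refine Set.mem_union_right _ (Set.mem_Ioc.mpr ⟨?_, (hprod x y hx0 hy0).mp hpc⟩)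
            rw [hτt] at hgt
            exact lt_of_mul_lt_mul_left hgt hβρn.le
        rw [if_pos hPxy, Set.indicator_of_mem hymem]
      · rw [if_neg hPxy, Set.indicator_of_notMem]
        intro hymem
        apply hPxy
        rcases hymem with ⟨_, hyz2⟩ | ⟨hyt, hyg⟩
        · left
          refine ⟨?_, (hsq y hy0).mpr hyz2⟩
          rw [hτt]
          exact mul_le_mul_of_nonneg_left (hyz2.trans hz2t) hβρn.le
        · right
          refine ⟨?_, (hprod x y hx0 hy0).mpr hyg⟩
          rw [hτt]
          exact (mul_lt_mul_iff_right₀ hβρn).mpr hyt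
    rw [setIntegral_congr_fun measurableSet_Ioi hEq,
      innerB x hz2pos.le hz2t htg]
    have e1 : -(x + z2) = -z2 - x := by ring
    have e2 : -(x + ((z4 - 1) * x - 1 / (β * ρn))) = 1 / (β * ρn) - z4 * x := by ring
    have e3 : -(x + (z2 + (z1 - 1) * x)) = -z2 - z1 * x := by ring
    rw [e1, e2, e3]
  -- region 3 inner integral
  have eq3 : ∀ x ∈ Set.Ioi z5,
      (∫ y in Set.Ioi (0:ℝ), (if ((β * ρn * y ≤ τ x ∧ (1 + β * ρn * y) ^ 2 ≤ 1 + ρn * y)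
            ∨ (β * ρn * y > τ x ∧
                (1 + β * ρn * y / (ρm * x + 1)) * (1 + β * ρn * y) ≤ 1 + ρn * y)) then Real.exp (-(x + y)) else 0))
        = Real.exp (-x) - Real.exp (-z2 - x) := by
    intro x hx
    have hxz5 : z5 < x := hx
    have hxz3 : z3 < x := lt_of_le_of_lt hz35 hxz5
    have hx0 : 0 < x := lt_trans hz3pos hxz3
    have hxαm : αm < x := lt_trans hαz3 hxz3
    have hτt : τ x = β * ρn * ((z4 - 1) * x - 1 / (β * ρn)) := by
      rw [hτgt x hxαm, htmul]
    have hz2t : z2 ≤ (z4 - 1) * x - 1 / (β * ρn) := hz2_le_t x hxz3.le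
    have hgt : z2 + (z1 - 1) * x ≤ (z4 - 1) * x - 1 / (β * ρn) := hg_le_t x hxz5.le
    have hEq : Set.EqOn (fun y : ℝ =>
        (if ((β * ρn * y ≤ τ x ∧ (1 + β * ρn * y) ^ 2 ≤ 1 + ρn * y)
            ∨ (β * ρn * y > τ x ∧
                (1 + β * ρn * y / (ρm * x + 1)) * (1 + β * ρn * y) ≤ 1 + ρn * y)) then Real.exp (-(x + y)) else 0))
        (fun y : ℝ => Set.indicator (Set.Ioc 0 z2) (fun y => Real.exp (-(x + y))) y) (Set.Ioi 0) := by
      intro y hy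
      dsimp only
      have hy0 : 0 < y := hy
      by_cases hPxy : ((β * ρn * y ≤ τ x ∧ (1 + β * ρn * y) ^ 2 ≤ 1 + ρn * y)
            ∨ (β * ρn * y > τ x ∧
                (1 + β * ρn * y / (ρm * x + 1)) * (1 + β * ρn * y) ≤ 1 + ρn * y))
      · have hymem : y ∈ Set.Ioc (0:ℝ) z2 := by
          rcases hPxy with ⟨_, hsqc⟩ | ⟨hgt2, hpc⟩
          · exact Set.mem_Ioc.mpr ⟨hy0, (hsq y hy0).mp hsqc⟩
          · exfalso
            have hyg : y ≤ z2 + (z1 - 1) * x := (hprod x y hx0 hy0).mp hpc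
            rw [hτt] at hgt2
            have := lt_of_mul_lt_mul_left hgt2 hβρn.le
            linarith
        rw [if_pos hPxy, Set.indicator_of_mem hymem]
      · rw [if_neg hPxy, Set.indicator_of_notMem]
        rintro ⟨_, hyz2⟩
        apply hPxy
        left
        refine ⟨?_, (hsq y hy0).mpr hyz2⟩
        rw [hτt]
        exact mul_le_mul_of_nonneg_left (hyz2.trans hz2t) hβρn.le
    rw [setIntegral_congr_fun measurableSet_Ioi hEq, innerA x hz2pos.le]
    congr 1
    ring_nf
  -- integrability of explicit functions
  have hf1cont : Continuous fun x : ℝ => Real.exp (-x) - Real.exp (-z2 - z1 * x) := by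
    fun_prop
  have hf2cont : Continuous fun x : ℝ => Real.exp (-x) - Real.exp (-z2 - x)
      + (Real.exp (1 / (β * ρn) - z4 * x) - Real.exp (-z2 - z1 * x)) := by
    fun_prop
  have hI1 : IntegrableOn (fun x => ∫ y in Set.Ioi (0:ℝ),
      (if ((β * ρn * y ≤ τ x ∧ (1 + β * ρn * y) ^ 2 ≤ 1 + ρn * y)
            ∨ (β * ρn * y > τ x ∧
                (1 + β * ρn * y / (ρm * x + 1)) * (1 + β * ρn * y) ≤ 1 + ρn * y)) then Real.exp (-(x + y)) else 0)) (Set.Ioc 0 z3) := by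
    exact MeasureTheory.IntegrableOn.congr_fun hf1cont.integrableOn_Ioc (fun x hx => (eq1 x hx).symm)
      measurableSet_Ioc
  have hI2 : IntegrableOn (fun x => ∫ y in Set.Ioi (0:ℝ),
      (if ((β * ρn * y ≤ τ x ∧ (1 + β * ρn * y) ^ 2 ≤ 1 + ρn * y)
            ∨ (β * ρn * y > τ x ∧
                (1 + β * ρn * y / (ρm * x + 1)) * (1 + β * ρn * y) ≤ 1 + ρn * y)) then Real.exp (-(x + y)) else 0)) (Set.Ioc z3 z5) := by
    exact MeasureTheory.IntegrableOn.congr_fun hf2cont.integrableOn_Ioc (fun x hx => (eq2 x hx).symm)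
      measurableSet_Ioc
  have hIexp : IntegrableOn (fun x : ℝ => Real.exp (-x)) (Set.Ioi z5) := by
    simpa using exp_neg_integrableOn_Ioi z5 one_pos
  have hIexp2 : IntegrableOn (fun x : ℝ => Real.exp (-z2 - x)) (Set.Ioi z5) := by
    apply MeasureTheory.IntegrableOn.congr_fun (hIexp.const_mul (Real.exp (-z2))) _ measurableSet_Ioi
    intro x _
    dsimp only
    rw [← Real.exp_add]
    ring_nf
  have hI3 : IntegrableOn (fun x => ∫ y in Set.Ioi (0:ℝ),
      (if ((β * ρn * y ≤ τ x ∧ (1 + β * ρn * y) ^ 2 ≤ 1 + ρn * y)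
            ∨ (β * ρn * y > τ x ∧
                (1 + β * ρn * y / (ρm * x + 1)) * (1 + β * ρn * y) ≤ 1 + ρn * y)) then Real.exp (-(x + y)) else 0)) (Set.Ioi z5) := by
    exact MeasureTheory.IntegrableOn.congr_fun (hIexp.sub hIexp2) (fun x hx => (eq3 x hx).symm) measurableSet_Ioi
  -- split the outer integral
  have hsplit : Set.Ioi (0:ℝ) = Set.Ioc 0 z3 ∪ (Set.Ioc z3 z5 ∪ Set.Ioi z5) := by
    rw [Set.Ioc_union_Ioi_eq_Ioi hz35, Set.Ioc_union_Ioi_eq_Ioi hz3pos.le]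
  have hd2 : Disjoint (Set.Ioc z3 z5) (Set.Ioi z5) :=
    Set.Ioc_disjoint_Ioi le_rfl
  have hd1 : Disjoint (Set.Ioc (0:ℝ) z3) (Set.Ioc z3 z5 ∪ Set.Ioi z5) := by
    refine Disjoint.union_right (Set.Ioc_disjoint_Ioc.mpr ?_) (Set.Ioc_disjoint_Ioi hz35)
    exact le_trans (min_le_left _ _) (le_max_right _ _)
  nth_rewrite 1 [hsplit]
  rw [setIntegral_union hd1 (measurableSet_Ioc.union measurableSet_Ioi)
      hI1 (hI2.union hI3),
    setIntegral_union hd2 measurableSet_Ioi hI2 hI3,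
    setIntegral_congr_fun measurableSet_Ioc eq1,
    setIntegral_congr_fun measurableSet_Ioc eq2,
    setIntegral_congr_fun measurableSet_Ioi eq3]
  -- compute the three explicit integrals
  have hone : ∀ x : ℝ, Real.exp (-x) = Real.exp (0 - 1 * x) := by
    intro x; ring_nf
  have honez : ∀ x : ℝ, Real.exp (-z2 - x) = Real.exp (-z2 - 1 * x) := by
    intro x; ring_nf
  have hR1 : ∫ x in Set.Ioc (0:ℝ) z3,
      (Real.exp (-x) - Real.exp (-z2 - z1 * x))
      = (1 - Real.exp (-z3)) - (Real.exp (-z2) - Real.exp (-z2 - z1 * z3)) / z1 := by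
    rw [integral_sub ((by fun_prop : Continuous fun x : ℝ => Real.exp (-x)).integrableOn_Ioc)
      ((by fun_prop : Continuous fun x : ℝ => Real.exp (-z2 - z1 * x)).integrableOn_Ioc)]
    simp only [hone]
    rw [expInt one_pos hz3pos.le 0, expInt hz1pos hz3pos.le (-z2)]
    norm_num
  have hR2 : ∫ x in Set.Ioc z3 z5,
      (Real.exp (-x) - Real.exp (-z2 - x)
        + (Real.exp (1 / (β * ρn) - z4 * x) - Real.exp (-z2 - z1 * x)))
      = ((Real.exp (-z3) - Real.exp (-z5))
          - (Real.exp (-z2 - z3) - Real.exp (-z2 - z5)))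
        + ((Real.exp (1 / (β * ρn) - z4 * z3) - Real.exp (1 / (β * ρn) - z4 * z5)) / z4
          - (Real.exp (-z2 - z1 * z3) - Real.exp (-z2 - z1 * z5)) / z1) := by
    rw [integral_add (f := fun x => Real.exp (-x) - Real.exp (-z2 - x))
      (g := fun x => Real.exp (1 / (β * ρn) - z4 * x) - Real.exp (-z2 - z1 * x))
      (((by fun_prop : Continuous fun x : ℝ => Real.exp (-x)).sub
        (by fun_prop : Continuous fun x : ℝ => Real.exp (-z2 - x))).integrableOn_Ioc)
      (((by fun_prop : Continuous fun x : ℝ => Real.exp (1 / (β * ρn) - z4 * x)).sub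
        (by fun_prop : Continuous fun x : ℝ => Real.exp (-z2 - z1 * x))).integrableOn_Ioc),
      integral_sub ((by fun_prop : Continuous fun x : ℝ => Real.exp (-x)).integrableOn_Ioc)
        ((by fun_prop : Continuous fun x : ℝ => Real.exp (-z2 - x)).integrableOn_Ioc),
      integral_sub ((by fun_prop :
          Continuous fun x : ℝ => Real.exp (1 / (β * ρn) - z4 * x)).integrableOn_Ioc)
        ((by fun_prop : Continuous fun x : ℝ => Real.exp (-z2 - z1 * x)).integrableOn_Ioc)]
    simp only [hone]
    rw [show (fun x : ℝ => Real.exp (-z2 - x)) = (fun x : ℝ => Real.exp (-z2 - 1 * x))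
      from funext fun x => by ring_nf]
    rw [expInt one_pos hz35 0, expInt one_pos hz35 (-z2),
      expInt hz4pos hz35 (1 / (β * ρn)), expInt hz1pos hz35 (-z2)]
    norm_num
  have hR3 : ∫ x in Set.Ioi z5, (Real.exp (-x) - Real.exp (-z2 - x))
      = Real.exp (-z5) - Real.exp (-z2) * Real.exp (-z5) := by
    rw [integral_sub hIexp hIexp2]
    rw [integral_exp_neg_Ioi]
    congr 1
    have : ∀ x : ℝ, Real.exp (-z2 - x) = Real.exp (-z2) * Real.exp (-x) := by
      intro x; rw [← Real.exp_add]; ring_nf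
    simp only [this]
    rw [integral_const_mul, integral_exp_neg_Ioi]
  rw [hR1, hR2, hR3, hV]
  have hz1ne : z1 ≠ 0 := ne_of_gt hz1pos
  have hz4ne : z4 ≠ 0 := ne_of_gt hz4pos
  have eb : Real.exp (-(z3 * z4)) = Real.exp (-(z4 * z3)) := by ring_nf
  rw [eb]
  simp only [Real.exp_sub, Real.exp_add, Real.exp_neg]
  field_simp
  ring
end

section
/- Let 0 < β < 1/2, η > 0, and ε_m > β/(1-β). For ρ > 0 set ρ_n = ρ, ρ_m = ρ/η, α_m = ε_m/ρ_m, τ(x) = max{0, x/α_m − 1}, and let P̃(ρ) = ∫∫_E e^{-(x+y)} dy dx, where E ⊆ [0,∞)² is the union of {(x,y) : βρ_n y ≤ τ(x), (1+βρ_n y)² ≤ 1+ρ_n y} and {(x,y) : βρ_n y > τ(x), (1 + βρ_n y/(ρ_m x + 1))(1+βρ_n y) ≤ 1+ρ_n y}. Then P̃(ρ) tends to E_r = 1/(1 + 1/(β ε_m η)) − 1/(1 + (1-β)/(β² η)) as ρ → ∞. -/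
set_option maxHeartbeats 1000000
open MeasureTheory Real Filter Set

lemma integral_exp_neg_mul_Ioi' {c : ℝ} (hc : 0 < c) :
    ∫ x in Set.Ioi (0:ℝ), Real.exp (-(c * x)) = 1 / c := by
  have h := integral_comp_mul_left_Ioi (fun u => Real.exp (-u)) 0 hc
  simp only [mul_zero, integral_exp_neg_Ioi, neg_zero, Real.exp_zero, smul_eq_mul, mul_one] at h
  rw [h, one_div]

lemma integral_exp_neg_Ioo' {A B : ℝ} (hAB : A ≤ B) :
    ∫ y in Set.Ioo A B, Real.exp (-y) = Real.exp (-A) - Real.exp (-B) := by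
  rw [← integral_Ioc_eq_integral_Ioo, ← intervalIntegral.integral_of_le hAB,
    intervalIntegral.integral_comp_neg (fun x => Real.exp x), integral_exp]

lemma eventual_iff (β η εm : ℝ) (hβ0 : 0 < β) (hβ1 : β < 1/2) (hη : 0 < η) (hεm : 0 < εm)
    (x y : ℝ) (hx : 0 < x) (hy : 0 < y)
    (hne1 : y ≠ (1/(β*εm*η))*x) (hne2 : y ≠ ((1-β)/(β^2*η))*x) :
    ∀ᶠ ρ in atTop,
      (((β * ρ * y ≤ max 0 (x / (εm / (ρ / η)) - 1)
                ∧ (1 + β * ρ * y) ^ 2 ≤ 1 + ρ * y)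
          ∨ (β * ρ * y > max 0 (x / (εm / (ρ / η)) - 1)
                ∧ (1 + β * ρ * y / ((ρ / η) * x + 1)) * (1 + β * ρ * y) ≤ 1 + ρ * y))
        ↔ ((1/(β*εm*η))*x < y ∧ y < ((1-β)/(β^2*η))*x)) := by
  have h2β : 0 < 1 - 2*β := by linarith
  have hβεη : (0:ℝ) < β*εm*η := by positivity
  have hβ2η : (0:ℝ) < β^2*η := by positivity
  have hmul1 : (1/(β*εm*η))*x*(β*εm*η) = x := by field_simp
  have hmul2 : ((1-β)/(β^2*η))*x*(β^2*η) = (1-β)*x := by field_simp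
  have hMax : ∀ ρ : ℝ, 0 < ρ → x / (εm / (ρ / η)) = ρ * x / (εm * η) := by
    intro ρ hρ
    field_simp
  have hnotQ : ∀ ρ : ℝ, 1 / (β^2 * y) ≤ ρ → ¬ ((1 + β * ρ * y) ^ 2 ≤ 1 + ρ * y) := by
    intro ρ hρ
    have hb2y : 0 < β^2 * y := by positivity
    have h1 : 1 ≤ ρ * (β^2*y) := (div_le_iff₀ hb2y).mp hρ
    have hρ0 : 0 < ρ := lt_of_lt_of_le (by positivity) hρ
    push_neg
    nlinarith [mul_pos hρ0 hy]
  rcases lt_trichotomy y ((1/(β*εm*η))*x) with hcase | hcase | hcase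
  · -- y below the lower line : both sides false
    have hlow : y*(β*εm*η) < x := by
      have h := mul_lt_mul_of_pos_right hcase hβεη
      rwa [hmul1] at h
    have hδ : 0 < x / (εm*η) - β*y := by
      have : β * y < x / (εm * η) := by
        rw [lt_div_iff₀ (by positivity)]
        nlinarith
      linarith
    filter_upwards [eventually_gt_atTop 0, eventually_ge_atTop (1/(β^2*y)),
      eventually_ge_atTop (1/(x/(εm*η) - β*y))] with ρ hρ0 hQ hB
    constructor
    · rintro (⟨-, hq⟩ | ⟨hlt, -⟩)
      · exact absurd hq (hnotQ ρ hQ)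
      · exfalso
        rw [hMax ρ hρ0] at hlt
        have h1 : 1 ≤ ρ * (x/(εm*η) - β*y) := (div_le_iff₀ hδ).mp hB
        have h2 : β*ρ*y ≤ ρ*x/(εm*η) - 1 := by
          have hra : ρ*x/(εm*η) = ρ*(x/(εm*η)) := mul_div_assoc _ _ _
          nlinarith
        exact absurd (h2.trans (le_max_right _ _)) (not_le.mpr hlt)
    · rintro ⟨h, -⟩; exact absurd hcase (not_lt.mpr h.le)
  · exact absurd hcase hne1
  rcases lt_trichotomy y (((1-β)/(β^2*η))*x) with hcase2 | hcase2 | hcase2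
  · -- the true region
    have hup : y*(β^2*η) < (1-β)*x := by
      have h := mul_lt_mul_of_pos_right hcase2 hβ2η
      rwa [hmul2] at h
    have hlow : x < y*(β*εm*η) := by
      have h := mul_lt_mul_of_pos_right hcase hβεη
      rwa [hmul1] at h
    filter_upwards [eventually_gt_atTop 0] with ρ hρ0
    have hρy : 0 < ρ * y := mul_pos hρ0 hy
    constructor
    · intro _; exact ⟨hcase, hcase2⟩
    · intro _
      right
      have hc : 0 < (ρ/η)*x + 1 := by positivity
      have hηc : η * ((ρ/η)*x + 1) = ρ*x + η := by field_simp
      constructor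
      · rw [hMax ρ hρ0]
        have h1 : ρ*x/(εm*η) < β*ρ*y := by
          rw [div_lt_iff₀ (by positivity)]
          nlinarith [mul_lt_mul_of_pos_left hlow hρ0]
        have h2 : max 0 (ρ*x/(εm*η) - 1) ≤ ρ*x/(εm*η) := by
          apply max_le _ (by linarith)
          positivity
        exact lt_of_le_of_lt h2 h1
      · -- the R inequality
        have hbr : 0 < (1-β)*(ρ*x) + (1-2*β)*η - η*β^2*(ρ*y) := by
          nlinarith [mul_lt_mul_of_pos_left hup hρ0]
        have hprod := mul_pos hρy hbr
        have h6 : (ρ*x + η + η*(β*ρ*y))*(1+β*ρ*y) ≤ (1+ρ*y)*(ρ*x+η) := by linarith [hprod]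
        have h4 : (((ρ/η)*x+1) + β*ρ*y)*(1+β*ρ*y) ≤ (1+ρ*y)*((ρ/η)*x+1) := by
          rw [← mul_le_mul_iff_right₀ hη]
          calc η*(((((ρ/η)*x+1) + β*ρ*y))*(1+β*ρ*y))
              = (η*((ρ/η)*x+1) + η*(β*ρ*y))*(1+β*ρ*y) := by ring
            _ = (ρ*x + η + η*(β*ρ*y))*(1+β*ρ*y) := by rw [hηc]
            _ ≤ (1+ρ*y)*(ρ*x+η) := h6
            _ = (1+ρ*y)*(η*((ρ/η)*x+1)) := by rw [hηc]
            _ = η*((1+ρ*y)*((ρ/η)*x+1)) := by ring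
        rw [show (1 + β*ρ*y/((ρ/η)*x+1)) = (((ρ/η)*x+1) + β*ρ*y)/((ρ/η)*x+1) by
            field_simp, div_mul_eq_mul_div, div_le_iff₀ hc]
        linarith
  · exact absurd hcase2 hne2
  · -- y above upper line : both false
    have hup : (1-β)*x < y*(β^2*η) := by
      have h := mul_lt_mul_of_pos_right hcase2 hβ2η
      rwa [hmul2] at h
    have hδ' : 0 < y*(β^2*η) - (1-β)*x := by linarith
    filter_upwards [eventually_gt_atTop 0, eventually_ge_atTop (1/(β^2*y)),
      eventually_gt_atTop ((1-2*β)*η / (y*(β^2*η) - (1-β)*x))] with ρ hρ0 hQ hB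
    have hρy : 0 < ρ * y := mul_pos hρ0 hy
    constructor
    · rintro (⟨-, hq⟩ | ⟨-, hr⟩)
      · exact absurd hq (hnotQ ρ hQ)
      · exfalso
        have hkey2 : (1-2*β)*η < ρ * (y*(β^2*η) - (1-β)*x) := (div_lt_iff₀ hδ').mp hB
        have hc : 0 < (ρ/η)*x + 1 := by positivity
        have hηc : η * ((ρ/η)*x + 1) = ρ*x + η := by field_simp
        rw [show (1 + β*ρ*y/((ρ/η)*x+1)) = (((ρ/η)*x+1) + β*ρ*y)/((ρ/η)*x+1) by
            field_simp, div_mul_eq_mul_div, div_le_iff₀ hc] at hr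
        have h6 : (ρ*x + η + η*(β*ρ*y))*(1+β*ρ*y) ≤ (1+ρ*y)*(ρ*x+η) := by
          calc (ρ*x + η + η*(β*ρ*y))*(1+β*ρ*y)
              = (η*((ρ/η)*x+1) + η*(β*ρ*y))*(1+β*ρ*y) := by rw [hηc]
            _ = η*(((((ρ/η)*x+1) + β*ρ*y))*(1+β*ρ*y)) := by ring
            _ ≤ η*((1+ρ*y)*((ρ/η)*x+1)) := by
                apply mul_le_mul_of_nonneg_left _ hη.le
                linarith
            _ = (1+ρ*y)*(η*((ρ/η)*x+1)) := by ring
            _ = (1+ρ*y)*(ρ*x+η) := by rw [hηc]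
        have hbr : 0 < η*β^2*(ρ*y) - (1-β)*(ρ*x) - (1-2*β)*η := by
          nlinarith [hkey2]
        linarith [mul_pos hρy hbr, h6]
    · rintro ⟨-, h⟩; exact absurd hcase2 (not_lt.mpr h.le)

theorem hsic_npa_limit_large_eps
    (β η εm : ℝ) (hβ0 : 0 < β) (hβ1 : β < 1/2) (hη : 0 < η)
    (hε : εm > β / (1 - β)) :
    Tendsto (fun ρ : ℝ =>
        ∫ x in Set.Ioi (0:ℝ), ∫ y in Set.Ioi (0:ℝ),
          (if (β * ρ * y ≤ max 0 (x / (εm / (ρ / η)) - 1)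
                ∧ (1 + β * ρ * y) ^ 2 ≤ 1 + ρ * y)
              ∨ (β * ρ * y > max 0 (x / (εm / (ρ / η)) - 1)
                ∧ (1 + β * ρ * y / ((ρ / η) * x + 1)) * (1 + β * ρ * y)
                    ≤ 1 + ρ * y)
            then Real.exp (-(x + y)) else 0))
      atTop
      (nhds (1 / (1 + 1 / (β * εm * η)) - 1 / (1 + (1 - β) / (β ^ 2 * η)))) := by
  have h1β : (0:ℝ) < 1 - β := by linarith
  have hεm : 0 < εm := lt_trans (by positivity) hε
  have hβε : β < (1-β)*εm := by
    rw [gt_iff_lt, div_lt_iff₀ h1β] at hε; linarith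
  set a : ℝ := 1/(β*εm*η) with ha_def
  set b : ℝ := (1-β)/(β^2*η) with hb_def
  have ha0 : 0 < a := by positivity
  have hb0 : 0 < b := by rw [hb_def]; positivity
  have hab : a < b := by
    rw [ha_def, hb_def, div_lt_div_iff₀ (by positivity) (by positivity)]
    nlinarith [mul_lt_mul_of_pos_right hβε (mul_pos hβ0 hη)]
  set μ : Measure ℝ := volume.restrict (Set.Ioi 0) with hμ_def
  set P : Measure (ℝ × ℝ) := μ.prod μ with hP_def
  set g : ℝ × ℝ → ℝ := fun p => Real.exp (-(p.1 + p.2)) with hg_def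
  set S : ℝ → Set (ℝ × ℝ) := fun ρ => {p : ℝ × ℝ |
      (β * ρ * p.2 ≤ max 0 (p.1 / (εm / (ρ / η)) - 1)
          ∧ (1 + β * ρ * p.2) ^ 2 ≤ 1 + ρ * p.2)
        ∨ (β * ρ * p.2 > max 0 (p.1 / (εm / (ρ / η)) - 1)
          ∧ (1 + β * ρ * p.2 / ((ρ / η) * p.1 + 1)) * (1 + β * ρ * p.2)
            ≤ 1 + ρ * p.2)} with hS_def
  set T : Set (ℝ × ℝ) := {p : ℝ × ℝ | a * p.1 < p.2 ∧ p.2 < b * p.1} with hT_def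
  have hS : ∀ ρ : ℝ, MeasurableSet (S ρ) := by
    intro ρ
    have m1 : MeasurableSet {p : ℝ × ℝ |
        β * ρ * p.2 ≤ max 0 (p.1 / (εm / (ρ / η)) - 1)} :=
      measurableSet_le (by fun_prop) (by fun_prop)
    have m2 : MeasurableSet {p : ℝ × ℝ | (1 + β * ρ * p.2) ^ 2 ≤ 1 + ρ * p.2} :=
      measurableSet_le (by fun_prop) (by fun_prop)
    have m3 : MeasurableSet {p : ℝ × ℝ |
        max 0 (p.1 / (εm / (ρ / η)) - 1) < β * ρ * p.2} :=
      measurableSet_lt (by fun_prop) (by fun_prop)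
    have m4 : MeasurableSet {p : ℝ × ℝ |
        (1 + β * ρ * p.2 / ((ρ / η) * p.1 + 1)) * (1 + β * ρ * p.2) ≤ 1 + ρ * p.2} :=
      measurableSet_le (by fun_prop) (by fun_prop)
    exact MeasurableSet.union (m1.inter m2) (m3.inter m4)
  have hT : MeasurableSet T := by
    have m1 : MeasurableSet {p : ℝ × ℝ | a * p.1 < p.2} :=
      measurableSet_lt (by fun_prop) (by fun_prop)
    have m2 : MeasurableSet {p : ℝ × ℝ | p.2 < b * p.1} :=
      measurableSet_lt (by fun_prop) (by fun_prop)
    exact m1.inter m2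
  have hgmeas : Measurable g := by fun_prop
  have he : Integrable (fun x => Real.exp (-x)) μ := by
    have := exp_neg_integrableOn_Ioi (0:ℝ) one_pos
    exact (by simpa using this : IntegrableOn (fun x => Real.exp (-x)) (Set.Ioi 0))
  have hgint : Integrable g P := by
    have heq : g = fun p : ℝ × ℝ => Real.exp (-p.1) * Real.exp (-p.2) := by
      funext p; rw [hg_def, ← Real.exp_add]; ring_nf
    rw [heq]
    exact he.mul_prod he
  -- iterated integral = integral over the product measure
  have hiter : ∀ ρ : ℝ,
      (∫ x in Set.Ioi (0:ℝ), ∫ y in Set.Ioi (0:ℝ),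
          (if (β * ρ * y ≤ max 0 (x / (εm / (ρ / η)) - 1)
                ∧ (1 + β * ρ * y) ^ 2 ≤ 1 + ρ * y)
              ∨ (β * ρ * y > max 0 (x / (εm / (ρ / η)) - 1)
                ∧ (1 + β * ρ * y / ((ρ / η) * x + 1)) * (1 + β * ρ * y)
                    ≤ 1 + ρ * y)
            then Real.exp (-(x + y)) else 0))
        = ∫ p, (S ρ).indicator g p ∂P := by
    intro ρ
    have h2 := MeasureTheory.integral_integral (μ := μ) (ν := μ)
      (f := fun x y => (S ρ).indicator g (x, y))
      (by exact hgint.indicator (hS ρ))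
    calc (∫ x in Set.Ioi (0:ℝ), ∫ y in Set.Ioi (0:ℝ),
          (if (β * ρ * y ≤ max 0 (x / (εm / (ρ / η)) - 1)
                ∧ (1 + β * ρ * y) ^ 2 ≤ 1 + ρ * y)
              ∨ (β * ρ * y > max 0 (x / (εm / (ρ / η)) - 1)
                ∧ (1 + β * ρ * y / ((ρ / η) * x + 1)) * (1 + β * ρ * y)
                    ≤ 1 + ρ * y)
            then Real.exp (-(x + y)) else 0))
        = ∫ x, (∫ y, (S ρ).indicator g (x, y) ∂μ) ∂μ := by
          simp only [Set.indicator_apply, hS_def, Set.mem_setOf_eq, hg_def, hμ_def]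
      _ = ∫ z, (S ρ).indicator g (z.1, z.2) ∂P := h2
      _ = ∫ p, (S ρ).indicator g p ∂P := rfl
  -- a.e. facts
  have hae0 : ∀ᵐ p ∂P, p ∈ Set.Ioi (0:ℝ) ×ˢ Set.Ioi (0:ℝ) := by
    rw [hP_def, hμ_def, Measure.prod_restrict]
    exact ae_restrict_mem (measurableSet_Ioi.prod measurableSet_Ioi)
  have hline : ∀ c : ℝ, ∀ᵐ p ∂P, p.2 ≠ c * p.1 := by
    intro c
    have hm : MeasurableSet {p : ℝ × ℝ | p.2 = c * p.1} :=
      measurableSet_eq_fun (by fun_prop) (by fun_prop)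
    rw [ae_iff]
    simp only [ne_eq, not_not]
    rw [hP_def, Measure.measure_prod_null hm]
    refine ae_of_all _ (fun x => ?_)
    show μ (Prod.mk x ⁻¹' {p : ℝ × ℝ | p.2 = c * p.1}) = 0
    have hpre : (Prod.mk x ⁻¹' {p : ℝ × ℝ | p.2 = c * p.1}) = {c * x} := by
      ext y; simp
    rw [hpre, hμ_def, Measure.restrict_apply' measurableSet_Ioi]
    exact measure_mono_null Set.inter_subset_left (Real.volume_singleton)
  -- pointwise a.e. convergence
  have hlim : ∀ᵐ p ∂P, Tendsto (fun ρ => (S ρ).indicator g p) atTop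
      (nhds (T.indicator g p)) := by
    filter_upwards [hae0, hline a, hline b] with p hp hl1 hl2
    obtain ⟨hx, hy⟩ := hp
    have hev := eventual_iff β η εm hβ0 hβ1 hη hεm p.1 p.2 hx hy hl1 hl2
    refine Tendsto.congr' ?_ tendsto_const_nhds
    filter_upwards [hev] with ρ hiff
    have hmem : (p ∈ S ρ) ↔ (p ∈ T) := hiff
    simp only [Set.indicator_apply]
    exact (if_congr hmem.symm rfl rfl)
  -- dominated convergence
  have key : Tendsto (fun ρ => ∫ p, (S ρ).indicator g p ∂P) atTop
      (nhds (∫ p, T.indicator g p ∂P)) := by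
    refine tendsto_integral_filter_of_dominated_convergence g ?_ ?_ hgint hlim
    · exact Eventually.of_forall fun ρ =>
        (hgmeas.indicator (hS ρ)).aestronglyMeasurable
    · refine Eventually.of_forall fun ρ => Eventually.of_forall fun p => ?_
      rw [Real.norm_eq_abs,
        abs_of_nonneg (Set.indicator_nonneg (fun q _ => (Real.exp_pos _).le) p)]
      exact Set.indicator_le_self' (fun q _ => (Real.exp_pos _).le) p
  -- computation of the limit integral
  have hfinal : ∫ p, T.indicator g p ∂P = 1 / (1 + a) - 1 / (1 + b) := by
    have e1 := MeasureTheory.integral_integral (μ := μ) (ν := μ)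
      (f := fun x y => T.indicator g (x, y))
      (by exact hgint.indicator hT)
    rw [show (∫ p, T.indicator g p ∂P) = ∫ z, T.indicator g (z.1, z.2) ∂P from rfl,
      ← e1, hμ_def]
    have inner_eq : ∀ x ∈ Set.Ioi (0:ℝ),
        (∫ y, T.indicator g (x, y) ∂(volume.restrict (Set.Ioi 0)))
          = Real.exp (-((1+a)*x)) - Real.exp (-((1+b)*x)) := by
      intro x hx
      have hx0 : 0 < x := hx
      have hsub : Set.Ioo (a*x) (b*x) ⊆ Set.Ioi (0:ℝ) := fun y hy =>
        lt_trans (by positivity) hy.1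
      have hptw : ∀ y : ℝ, T.indicator g (x, y)
          = (Set.Ioo (a*x) (b*x)).indicator (fun y => Real.exp (-(x+y))) y := by
        intro y
        simp only [Set.indicator_apply, hT_def, Set.mem_setOf_eq, Set.mem_Ioo, hg_def]
      simp_rw [hptw]
      rw [integral_indicator measurableSet_Ioo,
        Measure.restrict_restrict measurableSet_Ioo,
        Set.inter_eq_self_of_subset_left hsub]
      have hmul : ∀ y : ℝ, Real.exp (-(x+y)) = Real.exp (-x) * Real.exp (-y) := by
        intro y; rw [← Real.exp_add]; ring_nf
      simp_rw [hmul]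
      rw [MeasureTheory.integral_const_mul,
        integral_exp_neg_Ioo' (by nlinarith : a*x ≤ b*x),
        mul_sub, ← Real.exp_add, ← Real.exp_add]
      congr 2 <;> ring
    rw [setIntegral_congr_fun measurableSet_Ioi inner_eq]
    have i1 : IntegrableOn (fun x : ℝ => Real.exp (-((1+a)*x))) (Set.Ioi 0) := by
      have h := exp_neg_integrableOn_Ioi 0 (show (0:ℝ) < 1+a by linarith)
      simp only [neg_mul] at h
      exact h
    have i2 : IntegrableOn (fun x : ℝ => Real.exp (-((1+b)*x))) (Set.Ioi 0) := by
      have h := exp_neg_integrableOn_Ioi 0 (show (0:ℝ) < 1+b by linarith)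
      simp only [neg_mul] at h
      exact h
    rw [integral_sub i1 i2, integral_exp_neg_mul_Ioi' (by linarith : (0:ℝ) < 1+a),
      integral_exp_neg_mul_Ioi' (by linarith : (0:ℝ) < 1+b)]
  rw [show (1 / (1 + 1 / (β * εm * η)) - 1 / (1 + (1 - β) / (β ^ 2 * η)))
      = 1 / (1 + a) - 1 / (1 + b) from rfl, ← hfinal]
  exact key.congr (fun ρ => (hiter ρ).symm)
end

section
/- Let 0 < β < 1/2, η > 0, and 0 < ε_m < β/(1-β). For ρ > 0 set ρ_n = ρ, ρ_m = ρ/η, α_m = ε_m/ρ_m, τ(x) = max{0, x/α_m − 1}, and let P̃(ρ) = ∫∫_E e^{-(x+y)} dy dx, where E ⊆ [0,∞)² is the union of {(x,y) : βρ_n y ≤ τ(x), (1+βρ_n y)² ≤ 1+ρ_n y} and {(x,y) : βρ_n y > τ(x), (1 + βρ_n y/(ρ_m x + 1))(1+βρ_n y) ≤ 1+ρ_n y}. Then P̃(ρ) tends to 0 as ρ → ∞. -/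
open MeasureTheory Real Filter

noncomputable def hsicF (β η εm ρ x y : ℝ) : ℝ :=
  if (β * ρ * y ≤ max 0 (x / (εm / (ρ / η)) - 1)
        ∧ (1 + β * ρ * y) ^ 2 ≤ 1 + ρ * y)
      ∨ (β * ρ * y > max 0 (x / (εm / (ρ / η)) - 1)
        ∧ (1 + β * ρ * y / ((ρ / η) * x + 1)) * (1 + β * ρ * y)
            ≤ 1 + ρ * y)
    then Real.exp (-(x + y)) else 0

lemma hsicF_nonneg (β η εm ρ x y : ℝ) : 0 ≤ hsicF β η εm ρ x y := by
  unfold hsicF; split_ifs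
  · positivity
  · exact le_rfl

lemma hsicF_le (β η εm ρ x y : ℝ) : hsicF β η εm ρ x y ≤ Real.exp (-(x + y)) := by
  unfold hsicF; split_ifs
  · exact le_rfl
  · positivity

lemma exp_neg_int : IntegrableOn (fun y => Real.exp (-y)) (Set.Ioi (0:ℝ)) := by
  simpa using exp_neg_integrableOn_Ioi 0 one_pos

lemma exp_neg_shift_int (x : ℝ) :
    IntegrableOn (fun y => Real.exp (-(x + y))) (Set.Ioi (0:ℝ)) := by
  have : (fun y => Real.exp (-x) * Real.exp (-y)) = fun y => Real.exp (-(x + y)) := by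
    funext y; rw [← Real.exp_add, neg_add]
  rw [← this]; exact exp_neg_int.const_mul _

lemma exp_neg_shift_val (x : ℝ) :
    ∫ y in Set.Ioi (0:ℝ), Real.exp (-(x + y)) = Real.exp (-x) := by
  have : (fun y => Real.exp (-(x + y))) = fun y => Real.exp (-x) * Real.exp (-y) := by
    funext y; rw [← Real.exp_add, neg_add]
  rw [this, MeasureTheory.integral_const_mul, integral_exp_neg_Ioi_zero, mul_one]

lemma hsic_key (β η εm ρ x y : ℝ) (hβ0 : 0 < β) (hβ1 : β < 1/2) (hη : 0 < η)
    (hε0 : 0 < εm) (hε : εm < β / (1 - β)) (hρ : 0 < ρ) (hx : 0 < x) (hy : 0 < y)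
    (hcond : (β * ρ * y ≤ max 0 (x / (εm / (ρ / η)) - 1)
        ∧ (1 + β * ρ * y) ^ 2 ≤ 1 + ρ * y)
      ∨ (β * ρ * y > max 0 (x / (εm / (ρ / η)) - 1)
        ∧ (1 + β * ρ * y / ((ρ / η) * x + 1)) * (1 + β * ρ * y)
            ≤ 1 + ρ * y)) :
    y ≤ (1 - 2*β)/β^2/ρ ∨ x ≤ (1-β)*η*εm/(β - εm*(1-β))/ρ := by
  have h1β : 0 < 1 - β := by linarith
  have hD : 0 < β - εm * (1 - β) := by nlinarith [(lt_div_iff₀ h1β).mp hε]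
  rcases hcond with ⟨_, h2⟩ | ⟨h1, h2⟩
  · left
    rw [div_div, le_div_iff₀ (by positivity)]
    nlinarith [mul_pos hρ hy]
  · right
    have hρη : 0 < ρ/η := by positivity
    have hA : 0 < ρ/η * x + 1 := by positivity
    have hαm : 0 < εm / (ρ/η) := by positivity
    have h1' : x / (εm/(ρ/η)) < 1 + β*ρ*y := by
      have := lt_of_le_of_lt (le_max_right 0 (x / (εm / (ρ / η)) - 1)) h1
      linarith
    have e1 : x * ρ < (1 + β*ρ*y) * εm * η := by
      have hx2 : x < (1 + β*ρ*y) * (εm/(ρ/η)) := (div_lt_iff₀ hαm).mp h1'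
      have := mul_lt_mul_of_pos_right hx2 hρη
      rw [mul_assoc, div_mul_cancel₀ _ (ne_of_gt hρη)] at this
      have := mul_lt_mul_of_pos_right this hη
      calc x * ρ = x * (ρ/η) * η := by field_simp
        _ < (1 + β*ρ*y) * εm * η := this
    have e2 : β*(1 + β*(ρ*y))*η ≤ (1-β)*(ρ*x + η) := by
      have h2' := mul_le_mul_of_nonneg_right h2 hA.le
      have expand : (1 + β*ρ*y/(ρ/η*x+1)) * (1 + β*ρ*y) * (ρ/η*x+1)
          = ((ρ/η*x+1) + β*ρ*y)*(1+β*ρ*y) := by field_simp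
      rw [expand] at h2'
      have key : β*(1 + β*(ρ*y)) ≤ (1-β)*(ρ/η*x+1) := by
        nlinarith [mul_pos hρ hy]
      have := mul_le_mul_of_nonneg_right key hη.le
      calc β*(1 + β*(ρ*y))*η ≤ (1-β)*(ρ/η*x+1)*η := this
        _ = (1-β)*(ρ*x + η) := by field_simp
    rw [div_div, le_div_iff₀ (by positivity)]
    nlinarith [mul_lt_mul_of_pos_left e1 hβ0, mul_le_mul_of_nonneg_right e2 hε0.le]

theorem hsic_npa_limit_small_eps
    (β η εm : ℝ) (hβ0 : 0 < β) (hβ1 : β < 1/2) (hη : 0 < η)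
    (hε0 : 0 < εm) (hε : εm < β / (1 - β)) :
    Tendsto (fun ρ : ℝ =>
        ∫ x in Set.Ioi (0:ℝ), ∫ y in Set.Ioi (0:ℝ),
          (if (β * ρ * y ≤ max 0 (x / (εm / (ρ / η)) - 1)
                ∧ (1 + β * ρ * y) ^ 2 ≤ 1 + ρ * y)
              ∨ (β * ρ * y > max 0 (x / (εm / (ρ / η)) - 1)
                ∧ (1 + β * ρ * y / ((ρ / η) * x + 1)) * (1 + β * ρ * y)
                    ≤ 1 + ρ * y)
            then Real.exp (-(x + y)) else 0))
      atTop (nhds 0) := by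
  have h1β : 0 < 1 - β := by linarith
  have hD : 0 < β - εm * (1 - β) := by nlinarith [(lt_div_iff₀ h1β).mp hε]
  set c : ℝ := (1 - 2*β)/β^2 with hcdef
  set K : ℝ := (1-β)*η*εm/(β - εm*(1-β)) with hKdef
  have hc0 : 0 < c := by rw [hcdef]; have : 0 < 1 - 2*β := by linarith
                         positivity
  have hK0 : 0 < K := by rw [hKdef]; exact div_pos (by positivity) hD
  apply squeeze_zero' (g := fun ρ : ℝ => (K + c)/ρ)
  · filter_upwards with ρ
    apply setIntegral_nonneg measurableSet_Ioi
    intro x _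
    exact setIntegral_nonneg measurableSet_Ioi fun y _ => hsicF_nonneg β η εm ρ x y
  · filter_upwards [eventually_gt_atTop (0:ℝ)] with ρ hρ
    show (∫ x in Set.Ioi (0:ℝ), ∫ y in Set.Ioi (0:ℝ), hsicF β η εm ρ x y) ≤ (K + c)/ρ
    -- bound on the inner integral, valid for all x
    have hG1 : ∀ x : ℝ, (∫ y in Set.Ioi (0:ℝ), hsicF β η εm ρ x y) ≤ Real.exp (-x) := by
      intro x
      have := integral_mono_of_nonneg (μ := volume.restrict (Set.Ioi 0))
        (f := fun y => hsicF β η εm ρ x y) (g := fun y => Real.exp (-(x + y)))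
        (ae_of_all _ fun y => hsicF_nonneg β η εm ρ x y)
        (exp_neg_shift_int x)
        (ae_of_all _ fun y => hsicF_le β η εm ρ x y)
      rwa [exp_neg_shift_val x] at this
    -- sharper bound for x > K/ρ
    have hG2 : ∀ x : ℝ, K/ρ < x →
        (∫ y in Set.Ioi (0:ℝ), hsicF β η εm ρ x y) ≤ c/ρ * Real.exp (-x) := by
      intro x hxK
      have hx : 0 < x := lt_trans (by positivity) hxK
      set g2 : ℝ → ℝ := Set.indicator (Set.Iic (c/ρ)) (fun _ => Real.exp (-x)) with hg2
      have hg2i : Integrable g2 (volume.restrict (Set.Ioi 0)) := by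
        rw [hg2, integrable_indicator_iff measurableSet_Iic]
        refine integrableOn_const ?_
        rw [Measure.restrict_apply measurableSet_Iic, Set.inter_comm, Set.Ioi_inter_Iic]
        exact measure_Ioc_lt_top.ne
      have hmono : ∀ y ∈ Set.Ioi (0:ℝ), hsicF β η εm ρ x y ≤ g2 y := by
        intro y hy
        by_cases hyc : y ≤ c/ρ
        · rw [hg2, Set.indicator_of_mem (Set.mem_Iic.2 hyc)]
          calc hsicF β η εm ρ x y ≤ Real.exp (-(x + y)) := hsicF_le β η εm ρ x y
            _ ≤ Real.exp (-x) := by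
                apply Real.exp_le_exp.2; have : (0:ℝ) < y := hy; linarith
        · rw [hg2, Set.indicator_of_notMem (by simpa using hyc)]
          unfold hsicF
          split_ifs with h
          · exfalso
            rcases hsic_key β η εm ρ x y hβ0 hβ1 hη hε0 hε hρ hx (Set.mem_Ioi.1 hy) h with h' | h'
            · rw [← hcdef] at h'; exact hyc h'
            · rw [← hKdef] at h'; linarith
          · exact le_rfl
      have hle := integral_mono_of_nonneg (μ := volume.restrict (Set.Ioi 0))
        (f := fun y => hsicF β η εm ρ x y) (g := g2)
        (ae_of_all _ fun y => hsicF_nonneg β η εm ρ x y)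
        hg2i
        ((ae_restrict_mem measurableSet_Ioi).mono hmono)
      have hval : ∫ y, g2 y ∂(volume.restrict (Set.Ioi 0)) = c/ρ * Real.exp (-x) := by
        rw [hg2, integral_indicator measurableSet_Iic,
          Measure.restrict_restrict measurableSet_Iic, Set.inter_comm, Set.Ioi_inter_Iic,
          setIntegral_const, Real.volume_real_Ioc_of_le (div_pos hc0 hρ).le, smul_eq_mul]
        ring_nf
      rw [hval] at hle
      exact hle
    -- outer bound function
    set hb : ℝ → ℝ := fun x =>
      Set.indicator (Set.Iic (K/ρ)) (fun _ => (1:ℝ)) x + c/ρ * Real.exp (-x) with hhb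
    have hhi : Integrable hb (volume.restrict (Set.Ioi 0)) := by
      apply Integrable.add
      · rw [integrable_indicator_iff measurableSet_Iic]
        refine integrableOn_const ?_
        rw [Measure.restrict_apply measurableSet_Iic, Set.inter_comm, Set.Ioi_inter_Iic]
        exact measure_Ioc_lt_top.ne
      · exact exp_neg_int.const_mul _
    have houter : ∀ x ∈ Set.Ioi (0:ℝ),
        (∫ y in Set.Ioi (0:ℝ), hsicF β η εm ρ x y) ≤ hb x := by
      intro x hx
      by_cases hxK : x ≤ K/ρ
      · rw [hhb]
        simp only [Set.indicator_of_mem (Set.mem_Iic.2 hxK)]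
        have h1 := hG1 x
        have h2 : Real.exp (-x) ≤ 1 := by
          rw [Real.exp_le_one_iff]
          have : (0:ℝ) < x := hx
          linarith
        have h3 : 0 ≤ c/ρ * Real.exp (-x) := by positivity
        linarith
      · push_neg at hxK
        rw [hhb]
        have hmem' : x ∉ Set.Iic (K/ρ) := fun hm => (not_le.2 hxK) (Set.mem_Iic.1 hm)
        simp only [Set.indicator_of_notMem hmem']
        have := hG2 x hxK
        linarith
    have hFh := integral_mono_of_nonneg (μ := volume.restrict (Set.Ioi 0))
      (f := fun x => ∫ y in Set.Ioi (0:ℝ), hsicF β η εm ρ x y) (g := hb)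
      (ae_of_all _ fun x =>
        setIntegral_nonneg measurableSet_Ioi fun y _ => hsicF_nonneg β η εm ρ x y)
      hhi
      ((ae_restrict_mem measurableSet_Ioi).mono houter)
    have hval2 : ∫ x, hb x ∂(volume.restrict (Set.Ioi 0)) = K/ρ + c/ρ := by
      rw [hhb]
      rw [integral_add ?int1 ?int2]
      case int1 =>
        rw [integrable_indicator_iff measurableSet_Iic]
        refine integrableOn_const ?_
        rw [Measure.restrict_apply measurableSet_Iic, Set.inter_comm, Set.Ioi_inter_Iic]
        exact measure_Ioc_lt_top.ne
      case int2 => exact exp_neg_int.const_mul _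
      have p1 : ∫ x, Set.indicator (Set.Iic (K/ρ)) (fun _ => (1:ℝ)) x
          ∂(volume.restrict (Set.Ioi 0)) = K/ρ := by
        rw [integral_indicator measurableSet_Iic,
          Measure.restrict_restrict measurableSet_Iic, Set.inter_comm, Set.Ioi_inter_Iic,
          setIntegral_const, Real.volume_real_Ioc_of_le (div_pos hK0 hρ).le, smul_eq_mul, mul_one]
        ring
      have p2 : ∫ x, c/ρ * Real.exp (-x) ∂(volume.restrict (Set.Ioi 0)) = c/ρ := by
        rw [MeasureTheory.integral_const_mul, integral_exp_neg_Ioi_zero, mul_one]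
      rw [p1, p2]
    rw [hval2] at hFh
    calc (∫ x in Set.Ioi (0:ℝ), ∫ y in Set.Ioi (0:ℝ), hsicF β η εm ρ x y)
        ≤ K/ρ + c/ρ := hFh
      _ = (K + c)/ρ := by ring
  · exact tendsto_const_nhds.div_atTop tendsto_id
end

section
/- Let 0 < β < 1/2, ρ_m > 0, α_m > 0, and define f(x) = x² + (1/ρ_m − α_m/β)·x − (1-β)α_m/(βρ_m). Then f(α_m) < 0, f((1-β)α_m/β) < 0, and f(α_m/β) > 0; consequently f has exactly one root x₂ in the interval ((1-β)α_m/β, α_m/β), and f(x) < 0 for all x in [α_m, x₂) while f(x) > 0 for all x in (x₂, α_m/β]. -/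
theorem hsic_pa_quadratic_root
    (β ρm αm : ℝ) (hβ0 : 0 < β) (hβ1 : β < 1/2)
    (hρm : 0 < ρm) (hαm : 0 < αm)
    (f : ℝ → ℝ)
    (hf : ∀ x, f x = x ^ 2 + (1 / ρm - αm / β) * x - (1 - β) * αm / (β * ρm)) :
    f αm < 0 ∧ f ((1 - β) * αm / β) < 0 ∧ f (αm / β) > 0 ∧
    ∃ x₂ ∈ Set.Ioo ((1 - β) * αm / β) (αm / β),
      f x₂ = 0 ∧
      (∀ x ∈ Set.Ioo ((1 - β) * αm / β) (αm / β), f x = 0 → x = x₂) ∧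
      (∀ x ∈ Set.Ico αm x₂, f x < 0) ∧
      (∀ x ∈ Set.Ioc x₂ (αm / β), f x > 0) := by
  have hβ' : (0:ℝ) < 1 - β := by linarith
  have hβρ : 0 < β * ρm := by positivity
  have hfa : f αm < 0 := by
    rw [hf]
    have h : αm ^ 2 + (1 / ρm - αm / β) * αm - (1 - β) * αm / (β * ρm)
        = (αm * ((β - 1) * ρm * αm + (2 * β - 1))) / (β * ρm) := by
      field_simp; ring
    rw [h]
    apply div_neg_of_neg_of_pos _ hβρ
    have : (β - 1) * ρm * αm + (2 * β - 1) < 0 := by nlinarith [mul_pos hρm hαm]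
    nlinarith
  have hfy : f ((1 - β) * αm / β) < 0 := by
    rw [hf]
    have h : ((1 - β) * αm / β) ^ 2 + (1 / ρm - αm / β) * ((1 - β) * αm / β)
        - (1 - β) * αm / (β * ρm) = -((1 - β) * αm ^ 2 / β) := by
      field_simp; ring
    rw [h]
    have : 0 < (1 - β) * αm ^ 2 / β := by positivity
    linarith
  have hfz : f (αm / β) > 0 := by
    rw [hf]
    have h : (αm / β) ^ 2 + (1 / ρm - αm / β) * (αm / β)
        - (1 - β) * αm / (β * ρm) = αm / ρm := by
      field_simp; ring
    rw [h]; positivity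
  refine ⟨hfa, hfy, hfz, ?_⟩
  have hyz : (1 - β) * αm / β < αm / β := by
    rw [div_lt_div_iff₀ hβ0 hβ0]; nlinarith [mul_pos (mul_pos hβ0 hβ0) hαm]
  have hfc : Continuous f := by
    have hfe : f = fun x => x ^ 2 + (1 / ρm - αm / β) * x - (1 - β) * αm / (β * ρm) :=
      funext hf
    rw [hfe]; continuity
  have hsub := intermediate_value_Ioo hyz.le hfc.continuousOn
  obtain ⟨x₂, hx₂mem, hx₂0⟩ := hsub ⟨hfy, hfz⟩
  have hx₂pos : 0 < x₂ := lt_trans (by positivity) hx₂mem.1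
  have hfactor : ∀ x, f x = (x - x₂) * (x + x₂ + (1 / ρm - αm / β)) := by
    intro x
    have h0 := hf x₂
    rw [hx₂0] at h0
    rw [hf]
    nlinarith [h0]
  have hbpos : 0 < x₂ + (1 / ρm - αm / β) := by
    have h0 := hf x₂
    rw [hx₂0] at h0
    have hd : 0 < (1 - β) * αm / (β * ρm) := by positivity
    by_contra h
    push_neg at h
    nlinarith [mul_nonneg hx₂pos.le (neg_nonneg.mpr h)]
  refine ⟨x₂, hx₂mem, hx₂0, ?_, ?_, ?_⟩
  · intro x hx hfx
    have hxpos : 0 < x := lt_trans (by positivity) hx.1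
    have := hfactor x
    rw [hfx] at this
    rcases mul_eq_zero.mp this.symm with h | h
    · linarith
    · nlinarith
  · intro x hx
    rw [hfactor x]
    apply mul_neg_of_neg_of_pos
    · linarith [hx.2]
    · have : 0 < x := lt_of_lt_of_le hαm hx.1
      linarith
  · intro x hx
    rw [hfactor x]
    apply mul_pos
    · linarith [hx.1]
    · linarith [hx.1]
end

section
/- Let 0 < β < 1/2, ρ_m, ρ_n > 0, α_m > 0, and set z1 = 1 + (1-β)ρ_m/(β²ρ_n), z2 = (1-2β)/(β²ρ_n), A = ρ_m/(α_m β ρ_n), B = 1 + (1/α_m − ρ_m)/(βρ_n), Ψ(x) = ((1-β)(1+ρ_m x) − β)/(β²ρ_n), Ω(x) = (x/α_m − 1)(1+ρ_m x)/(βρ_n), and G(a,b) = e^{1/(βρ_n) + B²/(4A)}·(√π/(2√A))·(erf(√A·(a + B/(2A))) − erf(√A·(b + B/(2A)))). Let x₂ = ((α_mρ_m/β − 1) + √((α_mρ_m/β − 1)² + 4α_mρ_m(1-β)/β))/(2ρ_m). Then ∫_{α_m}^{x₂} ∫_{Ω(x)}^{Ψ(x)} e^{-(x+y)} dy dx = G(x₂,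 α_m) − (1/z1)·e^{-z2}·(e^{-z1 α_m} − e^{-z1 x₂}). -/
open MeasureTheory Real

/-- The Gauss error function. -/
noncomputable def erf (x : ℝ) : ℝ :=
  (2 / Real.sqrt Real.pi) * ∫ t in (0:ℝ)..x, Real.exp (-t ^ 2)

lemma integral_exp_neg_sq_erf (a b : ℝ) :
    ∫ t in a..b, Real.exp (-t ^ 2) = Real.sqrt Real.pi / 2 * (erf b - erf a) := by
  have hint : ∀ u v : ℝ, IntervalIntegrable (fun t : ℝ => Real.exp (-t ^ 2)) volume u v :=
    fun u v => (Continuous.intervalIntegrable (by continuity) u v)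
  have hsplit : (∫ t in a..b, Real.exp (-t ^ 2))
      = (∫ t in (0:ℝ)..b, Real.exp (-t ^ 2)) - ∫ t in (0:ℝ)..a, Real.exp (-t ^ 2) := by
    rw [intervalIntegral.integral_interval_sub_left (hint 0 b) (hint 0 a)]
  have hπ : Real.sqrt Real.pi > 0 := Real.sqrt_pos.mpr Real.pi_pos
  rw [hsplit]
  unfold erf
  field_simp

lemma integral_gauss_shift (A B c a b : ℝ) (hA : 0 < A) :
    ∫ x in a..b, Real.exp (-(A * x ^ 2 + B * x - c))
      = Real.exp (c + B ^ 2 / (4 * A)) * (Real.sqrt Real.pi / (2 * Real.sqrt A))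
        * (erf (Real.sqrt A * (b + B / (2 * A))) - erf (Real.sqrt A * (a + B / (2 * A)))) := by
  obtain ⟨s, hs, rfl⟩ : ∃ s : ℝ, 0 < s ∧ A = s ^ 2 :=
    ⟨Real.sqrt A, Real.sqrt_pos.mpr hA, (Real.sq_sqrt hA.le).symm⟩
  rw [Real.sqrt_sq hs.le]
  have hrw : ∀ x : ℝ, Real.exp (-(s ^ 2 * x ^ 2 + B * x - c))
      = Real.exp (c + B ^ 2 / (4 * s ^ 2)) *
        Real.exp (-(s * x + B / (2 * s)) ^ 2) := by
    intro x
    rw [← Real.exp_add]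
    congr 1
    field_simp
    ring
  simp_rw [hrw]
  rw [intervalIntegral.integral_const_mul]
  have hcomp : (∫ x in a..b, Real.exp (-(s * x + B / (2 * s)) ^ 2))
      = s⁻¹ • ∫ u in (s * a + B / (2 * s))..(s * b + B / (2 * s)), Real.exp (-u ^ 2) :=
    intervalIntegral.integral_comp_mul_add (fun u => Real.exp (-u ^ 2)) hs.ne' (B / (2 * s))
  rw [hcomp, integral_exp_neg_sq_erf]
  have e1 : ∀ t : ℝ, s * t + B / (2 * s) = s * (t + B / (2 * s ^ 2)) := by
    intro t; field_simp
  rw [e1 b, e1 a, smul_eq_mul]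
  field_simp

lemma integral_exp_neg_lin (k a b : ℝ) (hk : k ≠ 0) :
    ∫ x in a..b, Real.exp (-(k * x)) = (Real.exp (-(k * a)) - Real.exp (-(k * b))) / k := by
  have : ∀ x : ℝ, Real.exp (-(k * x)) = Real.exp ((-k) * x + 0) := by
    intro x; congr 1; ring
  simp_rw [this]
  rw [intervalIntegral.integral_comp_mul_add (fun u => Real.exp u) (neg_ne_zero.mpr hk) 0,
    integral_exp, smul_eq_mul]
  have hkk : k * k⁻¹ = 1 := mul_inv_cancel₀ hk
  field_simp
  linear_combination 0 * hkk

theorem hsic_pa_P_II21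
    (β ρm ρn αm : ℝ) (hβ0 : 0 < β) (hβ1 : β < 1/2)
    (hρm : 0 < ρm) (hρn : 0 < ρn) (hαm : 0 < αm)
    (z1 z2 A B x₂ : ℝ) (Ψ Ω : ℝ → ℝ) (G : ℝ → ℝ → ℝ)
    (hz1 : z1 = 1 + (1 - β) * ρm / (β ^ 2 * ρn))
    (hz2 : z2 = (1 - 2 * β) / (β ^ 2 * ρn))
    (hA : A = ρm / (αm * β * ρn))
    (hB : B = 1 + (1 / αm - ρm) / (β * ρn))
    (hΨ : ∀ x, Ψ x = ((1 - β) * (1 + ρm * x) - β) / (β ^ 2 * ρn))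
    (hΩ : ∀ x, Ω x = (x / αm - 1) * (1 + ρm * x) / (β * ρn))
    (hG : ∀ a b, G a b = Real.exp (1 / (β * ρn) + B ^ 2 / (4 * A))
        * (Real.sqrt Real.pi / (2 * Real.sqrt A))
        * (erf (Real.sqrt A * (a + B / (2 * A)))
            - erf (Real.sqrt A * (b + B / (2 * A)))))
    (hx2 : x₂ = ((αm * ρm / β - 1)
        + Real.sqrt ((αm * ρm / β - 1) ^ 2 + 4 * (αm * ρm) * ((1 - β) / β)))
        / (2 * ρm)) :
    (∫ x in αm..x₂, ∫ y in (Ω x)..(Ψ x), Real.exp (-(x + y)))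
      = G x₂ αm
        - (1 / z1) * Real.exp (-z2)
          * (Real.exp (-(z1 * αm)) - Real.exp (-(z1 * x₂))) := by
  have hβρn : β * ρn > 0 := mul_pos hβ0 hρn
  have hβ2ρn : β ^ 2 * ρn > 0 := mul_pos (pow_pos hβ0 2) hρn
  have hApos : 0 < A := by
    rw [hA]; positivity
  have hz1pos : 0 < z1 := by
    rw [hz1]
    have : (0:ℝ) < (1 - β) * ρm / (β ^ 2 * ρn) := by
      apply div_pos (mul_pos (by linarith) hρm) hβ2ρn
    linarith
  -- inner integral
  have hinner : ∀ x : ℝ, (∫ y in (Ω x)..(Ψ x), Real.exp (-(x + y)))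
      = Real.exp (-(x + Ω x)) - Real.exp (-(x + Ψ x)) := by
    intro x
    have h1 : ∀ y : ℝ, Real.exp (-(x + y)) = Real.exp (-x) * Real.exp (-y) := by
      intro y; rw [← Real.exp_add]; ring_nf
    simp_rw [h1]
    rw [intervalIntegral.integral_const_mul, intervalIntegral.integral_comp_neg
      (fun y => Real.exp y), integral_exp]
    rw [mul_sub, ← Real.exp_add, ← Real.exp_add]
  rw [intervalIntegral.integral_congr (fun x _ => hinner x)]
  -- key algebraic identities
  have hΩid : ∀ x : ℝ, x + Ω x = A * x ^ 2 + B * x - 1 / (β * ρn) := by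
    intro x
    rw [hΩ, hA, hB]
    field_simp
    ring
  have hΨid : ∀ x : ℝ, x + Ψ x = z1 * x + z2 := by
    intro x
    rw [hΨ, hz1, hz2]
    field_simp
    ring
  have hΩc : ∀ x : ℝ, Real.exp (-(x + Ω x)) = Real.exp (-(A * x ^ 2 + B * x - 1 / (β * ρn))) := by
    intro x; rw [hΩid]
  have hΨc : ∀ x : ℝ, Real.exp (-(x + Ψ x)) = Real.exp (-z2) * Real.exp (-(z1 * x)) := by
    intro x; rw [hΨid, ← Real.exp_add]; congr 1; ring
  simp_rw [hΩc, hΨc]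
  have hi1 : IntervalIntegrable (fun x => Real.exp (-(A * x ^ 2 + B * x - 1 / (β * ρn))))
      volume αm x₂ := Continuous.intervalIntegrable (by fun_prop) _ _
  have hi2 : IntervalIntegrable (fun x => Real.exp (-z2) * Real.exp (-(z1 * x)))
      volume αm x₂ := Continuous.intervalIntegrable (by fun_prop) _ _
  rw [intervalIntegral.integral_sub hi1 hi2,
    integral_gauss_shift A B (1 / (β * ρn)) αm x₂ hApos,
    intervalIntegral.integral_const_mul, integral_exp_neg_lin z1 αm x₂ hz1pos.ne',
    hG]
  field_simp
end

section
/- Let 0 < β < 1/2, ρ_m, ρ_n > 0, α_m > 0, and set z3 = (1-β)α_m/β, z4 = 1 + 1/(α_m β ρ_n), A = ρ_m/(α_m β ρ_n), B = 1 + (1/α_m − ρ_m)/(βρ_n), Φ(x) = (x/α_m − 1)/(βρ_n), Ω(x) = (x/α_m − 1)(1+ρ_m x)/(βρ_n), and G(a,b) = e^{1/(βρ_n) + B²/(4A)}·(√π/(2√A))·(erf(√A·(a + B/(2A))) − erf(√A·(b + B/(2A)))). Then ∫_{α_m}^{z3} ∫_{Φ(x)}^{Ω(x)} e^{-(x+y)}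 dy dx = (1/z4)·e^{1/(βρ_n)}·(e^{-z4 α_m} − e^{-z4 z3}) − G(z3, α_m). -/
open MeasureTheory Real

theorem hsic_pa_P_II221
    (β ρm ρn αm : ℝ) (hβ0 : 0 < β) (hβ1 : β < 1/2)
    (hρm : 0 < ρm) (hρn : 0 < ρn) (hαm : 0 < αm)
    (z3 z4 A B : ℝ) (Φ Ω : ℝ → ℝ) (G : ℝ → ℝ → ℝ)
    (hz3 : z3 = (1 - β) * αm / β)
    (hz4 : z4 = 1 + 1 / (αm * β * ρn))
    (hA : A = ρm / (αm * β * ρn))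
    (hB : B = 1 + (1 / αm - ρm) / (β * ρn))
    (hΦ : ∀ x, Φ x = (x / αm - 1) / (β * ρn))
    (hΩ : ∀ x, Ω x = (x / αm - 1) * (1 + ρm * x) / (β * ρn))
    (hG : ∀ a b, G a b = Real.exp (1 / (β * ρn) + B ^ 2 / (4 * A))
        * (Real.sqrt Real.pi / (2 * Real.sqrt A))
        * (erf (Real.sqrt A * (a + B / (2 * A)))
            - erf (Real.sqrt A * (b + B / (2 * A))))) :
    (∫ x in αm..z3, ∫ y in (Φ x)..(Ω x), Real.exp (-(x + y)))
      = (1 / z4) * Real.exp (1 / (β * ρn))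
          * (Real.exp (-(z4 * αm)) - Real.exp (-(z4 * z3)))
        - G z3 αm := by
  have hβρ : (0:ℝ) < β * ρn := mul_pos hβ0 hρn
  have hA0 : 0 < A := by rw [hA]; positivity
  have hsA : (0:ℝ) < Real.sqrt A := Real.sqrt_pos.mpr hA0
  have hz40 : (0:ℝ) < z4 := by rw [hz4]; positivity
  set c : ℝ := 1 / (β * ρn) with hc
  set d : ℝ := B / (2 * A) with hd
  set K : ℝ := Real.exp (c + B ^ 2 / (4 * A)) with hK
  -- compute the inner integral
  have hinner : ∀ x : ℝ, (∫ y in (Φ x)..(Ω x), Real.exp (-(x + y)))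
      = Real.exp c * Real.exp (-(z4 * x))
        - K * Real.exp (-(Real.sqrt A * (x + d)) ^ 2) := by
    intro x
    have h1 : (∫ y in (Φ x)..(Ω x), Real.exp (-(x + y)))
        = Real.exp (-(x + Φ x)) - Real.exp (-(x + Ω x)) := by
      have hmul : ∀ y : ℝ, Real.exp (-(x + y)) = Real.exp (-x) * Real.exp (-y) := by
        intro y; rw [← Real.exp_add]; ring_nf
      simp only [hmul]
      rw [intervalIntegral.integral_const_mul]
      have h2 : (∫ y in (Φ x)..(Ω x), Real.exp (-y))
          = Real.exp (-(Φ x)) - Real.exp (-(Ω x)) := by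
        rw [intervalIntegral.integral_comp_neg Real.exp, integral_exp]
      rw [h2, mul_sub, ← Real.exp_add, ← Real.exp_add, ← neg_add, ← neg_add]
    have hΦx : x + Φ x = z4 * x - c := by
      rw [hΦ, hz4, hc]; field_simp; ring
    have hΩx : x + Ω x = (Real.sqrt A * (x + d)) ^ 2 - (c + B ^ 2 / (4 * A)) := by
      have hsq : (Real.sqrt A * (x + d)) ^ 2 = A * (x + d) ^ 2 := by
        rw [mul_pow, Real.sq_sqrt hA0.le]
      rw [hsq, hd]
      have hA' : A = ρm / (αm * β * ρn) := hA
      have hB' : B = 1 + (1 / αm - ρm) / (β * ρn) := hB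
      rw [hΩ, hc]
      have hAne : A ≠ 0 := hA0.ne'
      field_simp
      rw [hA', hB']
      field_simp
      ring
    rw [h1, hΦx, hΩx]
    have e1 : Real.exp (-(z4 * x - c)) = Real.exp c * Real.exp (-(z4 * x)) := by
      rw [← Real.exp_add]; ring_nf
    have e2 : Real.exp (-((Real.sqrt A * (x + d)) ^ 2 - (c + B ^ 2 / (4 * A))))
        = K * Real.exp (-(Real.sqrt A * (x + d)) ^ 2) := by
      rw [hK, ← Real.exp_add]; ring_nf
    rw [e1, e2]
  simp only [hinner]
  have hcont1 : Continuous fun x : ℝ => Real.exp c * Real.exp (-(z4 * x)) := by fun_prop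
  have hcont2 : Continuous fun x : ℝ => K * Real.exp (-(Real.sqrt A * (x + d)) ^ 2) := by
    fun_prop
  rw [intervalIntegral.integral_sub (hcont1.intervalIntegrable _ _)
    (hcont2.intervalIntegrable _ _), intervalIntegral.integral_const_mul,
    intervalIntegral.integral_const_mul]
  -- first integral
  have hI1 : (∫ x in αm..z3, Real.exp (-(z4 * x)))
      = (Real.exp (-(z4 * αm)) - Real.exp (-(z4 * z3))) / z4 := by
    have : ∀ x : ℝ, Real.exp (-(z4 * x)) = Real.exp ((-z4) * x) := by
      intro x; ring_nf
    simp only [this]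
    rw [intervalIntegral.integral_comp_mul_left Real.exp (c := -z4) (by linarith), integral_exp]
    simp only [smul_eq_mul]
    have e : ∀ x : ℝ, -z4 * x = -(z4 * x) := fun x => by ring
    rw [e, e]
    field_simp [hz40.ne']
    ring
  -- second integral
  have hI2 : (∫ x in αm..z3, Real.exp (-(Real.sqrt A * (x + d)) ^ 2))
      = (Real.sqrt A)⁻¹ * ∫ t in (Real.sqrt A * αm + Real.sqrt A * d)..(Real.sqrt A * z3 + Real.sqrt A * d),
          Real.exp (-t ^ 2) := by
    have : ∀ x : ℝ, Real.exp (-(Real.sqrt A * (x + d)) ^ 2)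
        = (fun t : ℝ => Real.exp (-t ^ 2)) (Real.sqrt A * x + Real.sqrt A * d) := by
      intro x; simp only []; ring_nf
    simp only [this]
    rw [intervalIntegral.integral_comp_mul_add (fun t : ℝ => Real.exp (-t ^ 2)) hsA.ne'
      (Real.sqrt A * d)]
    simp [smul_eq_mul]
  rw [hI1, hI2, hG]
  -- now unfold erf and combine
  have hintg : ∀ a b : ℝ, IntervalIntegrable (fun t : ℝ => Real.exp (-t ^ 2)) volume a b :=
    fun a b => (by fun_prop : Continuous fun t : ℝ => Real.exp (-t ^ 2)).intervalIntegrable a b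
  have hsub : (∫ t in (0:ℝ)..(Real.sqrt A * (z3 + d)), Real.exp (-t ^ 2))
      - (∫ t in (0:ℝ)..(Real.sqrt A * (αm + d)), Real.exp (-t ^ 2))
      = ∫ t in (Real.sqrt A * αm + Real.sqrt A * d)..(Real.sqrt A * z3 + Real.sqrt A * d),
          Real.exp (-t ^ 2) := by
    rw [intervalIntegral.integral_interval_sub_left (hintg _ _) (hintg _ _)]
    congr 1 <;> ring
  have hπ : (0:ℝ) < Real.sqrt Real.pi := Real.sqrt_pos.mpr Real.pi_pos
  simp only [erf]
  rw [← hsub]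
  field_simp [hπ.ne', hsA.ne', hz40.ne']
end

section
/- Let 0 < β < 1/2, η > 0, and ε_m > 0. For ρ > 0 set ρ_n = ρ, ρ_m = ρ/η, α_m = ε_m/ρ_m, τ(x) = max{0, x/α_m − 1}, and let P̂(ρ) = ∫∫_Ê e^{-(x+y)} dy dx, where Ê ⊆ [0,∞)² is the union of {(x,y) : βρ_n y ≤ τ(x), (1+βρ_n y)² ≤ 1+ρ_n y} and {(x,y) : βρ_n y > τ(x), max{1 + βρ_n y/(ρ_m x + 1), 1 + τ(x)}·(1+βρ_n y) ≤ 1+ρ_n y}. Then P̂(ρ) tends to 0 as ρ → ∞. -/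
open MeasureTheory Real Filter

set_option maxHeartbeats 1000000 in
lemma key_bound (β η εm ρ x y : ℝ) (hβ0 : 0 < β) (hβ1 : β < 1/2) (hη : 0 < η)
    (hε : 0 < εm) (hρ : 0 < ρ) (hx : 0 < x) (hy : 0 < y)
    (hc : (β * ρ * y ≤ max 0 (x / (εm / (ρ / η)) - 1)
                ∧ (1 + β * ρ * y) ^ 2 ≤ 1 + ρ * y)
              ∨ (β * ρ * y > max 0 (x / (εm / (ρ / η)) - 1)
                ∧ max (1 + β * ρ * y / ((ρ / η) * x + 1))
                      (1 + max 0 (x / (εm / (ρ / η)) - 1))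
                    * (1 + β * ρ * y) ≤ 1 + ρ * y)) :
    y ≤ ((1-2*β)/β^2 + (1-β)*(β+εm)/β^3) / ρ := by
  have hβ2 : (0:ℝ) < β^2 := by positivity
  have hβ3 : (0:ℝ) < β^3 := by positivity
  have h1β : (0:ℝ) < 1 - β := by linarith
  have hQ : (0:ℝ) < ρ * y := by positivity
  set Q : ℝ := ρ * y with hQdef
  have hCeq : β^3 * ((1-2*β)/β^2 + (1-β)*(β+εm)/β^3) = β*(1-2*β) + (1-β)*(β+εm) := by
    field_simp
  rw [le_div_iff₀ hρ]
  have hyρ : y * ρ = Q := by rw [hQdef]; ring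
  rw [hyρ]
  -- suffices to bound β^3 * Q
  suffices hs : β^3 * Q ≤ β*(1-2*β) + (1-β)*(β+εm) by
    have := hCeq ▸ hs
    exact le_of_mul_le_mul_left (by linarith) hβ3
  rcases hc with ⟨-, hcase⟩ | ⟨hgt, hmax⟩
  · -- Case 1
    have hsQ : β * ρ * y = β * Q := by rw [hQdef]; ring
    rw [hsQ] at hcase
    clear_value Q
    have hb : β^2 * Q ≤ 1 - 2*β := by nlinarith [hQ, mul_pos hQ hQ]
    nlinarith [mul_nonneg hβ0.le (mul_nonneg h1β.le (by linarith : (0:ℝ) ≤ β + εm)),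
      mul_le_mul_of_nonneg_left hb hβ0.le]
  · -- Case 2
    set s : ℝ := β * ρ * y with hsdef
    have hsQ : s = β * Q := by rw [hsdef, hQdef]; ring
    have hs0 : 0 < s := by positivity
    have hu : (0:ℝ) < 1 + s := by linarith
    set D : ℝ := (ρ/η) * x + 1 with hDdef
    have hDpos : (0:ℝ) < D := by positivity
    set t : ℝ := x / (εm / (ρ/η)) with htdef
    have ht : 0 < t := by positivity
    have hDt : D = 1 + εm * t := by
      rw [hDdef, htdef]
      field_simp
      ring
    clear_value s D t Q
    have h1 : (1 + s/D) * (1+s) ≤ 1 + Q :=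
      le_trans (mul_le_mul_of_nonneg_right (le_max_left _ _) hu.le) hmax
    have h2 : (1 + max 0 (t-1)) * (1+s) ≤ 1 + Q :=
      le_trans (mul_le_mul_of_nonneg_right (le_max_right _ _) hu.le) hmax
    have h2' : t * (1+s) ≤ 1 + Q := by
      refine le_trans (mul_le_mul_of_nonneg_right ?_ hu.le) h2
      have := le_max_right (0:ℝ) (t-1)
      linarith
    have A1 : (D + s) * (1+s) ≤ (1+Q) * D := by
      have e1 : (1 + s/D) * (1+s) * D = (D+s) * (1+s) := by
        field_simp
      have := mul_le_mul_of_nonneg_right h1 hDpos.le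
      rw [e1] at this
      exact this
    have G1 : β * (1+s) ≤ (1-β) * D := by nlinarith [A1, hQ, hsQ]
    have hbu : (0:ℝ) ≤ β * (1+s) := by positivity
    have hsq : (β*(1+s)) * (β*(1+s)) ≤ ((1-β)*D) * (β*(1+s)) :=
      mul_le_mul_of_nonneg_right G1 hbu
    rw [hDt] at hsq
    have htu2 : (1-β)*εm*(β*(t*(1+s))) ≤ (1-β)*εm*(β*(1+Q)) :=
      mul_le_mul_of_nonneg_left (mul_le_mul_of_nonneg_left h2' hβ0.le)
        (by positivity)
    have hG2a : (1-β)*εm*(β*(1+Q)) = (1-β)*(εm*(β+s)) := by rw [hsQ]; ring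
    have htu3 : (1-β)*εm*(β*(t*(1+s))) ≤ (1-β)*(εm*(β+s)) := hG2a ▸ htu2
    have G2 : β^2*(1+s)^2 ≤ (1-β)*(β*(1+s) + εm*(β+s)) := by linarith [hsq, htu3]
    have hbs : (1-β)*(εm*(β+s)) ≤ (1-β)*(εm*(1+s)) := by
      have : (0:ℝ) ≤ (1-β)*εm*(1-β) := by positivity
      linarith [this]
    clear hmax hgt h1 h2 h2' A1 G1 hsq htu2 htu3 hG2a hbu hDt hDpos
    have G3 : β^2*(1+s) ≤ (1-β)*(β+εm) := by nlinarith [G2, hbs, hu]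
    rw [hsQ] at G3
    nlinarith [G3, mul_nonneg hβ0.le h1β.le]


theorem hsic_pa_limit
    (β η εm : ℝ) (hβ0 : 0 < β) (hβ1 : β < 1/2) (hη : 0 < η) (hε : 0 < εm) :
    Tendsto (fun ρ : ℝ =>
        ∫ x in Set.Ioi (0:ℝ), ∫ y in Set.Ioi (0:ℝ),
          (if (β * ρ * y ≤ max 0 (x / (εm / (ρ / η)) - 1)
                ∧ (1 + β * ρ * y) ^ 2 ≤ 1 + ρ * y)
              ∨ (β * ρ * y > max 0 (x / (εm / (ρ / η)) - 1)
                ∧ max (1 + β * ρ * y / ((ρ / η) * x + 1))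
                      (1 + max 0 (x / (εm / (ρ / η)) - 1))
                    * (1 + β * ρ * y) ≤ 1 + ρ * y)
            then Real.exp (-(x + y)) else 0))
      atTop (nhds 0) := by
  set C : ℝ := (1-2*β)/β^2 + (1-β)*(β+εm)/β^3 with hCdef
  have h12 : (0:ℝ) < 1 - 2*β := by linarith
  have h1β : (0:ℝ) < 1 - β := by linarith
  have hC : 0 < C := by rw [hCdef]; positivity
  have key : ∀ ρ x y : ℝ, 0 < ρ → 0 < x → 0 < y →
      ((β * ρ * y ≤ max 0 (x / (εm / (ρ / η)) - 1)
                ∧ (1 + β * ρ * y) ^ 2 ≤ 1 + ρ * y)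
              ∨ (β * ρ * y > max 0 (x / (εm / (ρ / η)) - 1)
                ∧ max (1 + β * ρ * y / ((ρ / η) * x + 1))
                      (1 + max 0 (x / (εm / (ρ / η)) - 1))
                    * (1 + β * ρ * y) ≤ 1 + ρ * y)) → y ≤ C / ρ := by
    intro ρ x y hρ hx hy hc
    exact key_bound β η εm ρ x y hβ0 hβ1 hη hε hρ hx hy hc
  apply squeeze_zero'
  · filter_upwards with ρ
    refine integral_nonneg fun x => integral_nonneg fun y => ?_
    dsimp only
    split_ifs <;> positivity
  · filter_upwards [eventually_gt_atTop (0:ℝ)] with ρ hρ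
    have hCρ : 0 ≤ C / ρ := le_of_lt (by positivity)
    have hinner : ∀ x : ℝ, 0 < x →
        (∫ y in Set.Ioi (0:ℝ),
          (if (β * ρ * y ≤ max 0 (x / (εm / (ρ / η)) - 1)
                ∧ (1 + β * ρ * y) ^ 2 ≤ 1 + ρ * y)
              ∨ (β * ρ * y > max 0 (x / (εm / (ρ / η)) - 1)
                ∧ max (1 + β * ρ * y / ((ρ / η) * x + 1))
                      (1 + max 0 (x / (εm / (ρ / η)) - 1))
                    * (1 + β * ρ * y) ≤ 1 + ρ * y)
            then Real.exp (-(x + y)) else 0))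
          ≤ Real.exp (-x) * (C / ρ) := by
      intro x hx
      have hmono : (∫ y in Set.Ioi (0:ℝ),
          (if (β * ρ * y ≤ max 0 (x / (εm / (ρ / η)) - 1)
                ∧ (1 + β * ρ * y) ^ 2 ≤ 1 + ρ * y)
              ∨ (β * ρ * y > max 0 (x / (εm / (ρ / η)) - 1)
                ∧ max (1 + β * ρ * y / ((ρ / η) * x + 1))
                      (1 + max 0 (x / (εm / (ρ / η)) - 1))
                    * (1 + β * ρ * y) ≤ 1 + ρ * y)
            then Real.exp (-(x + y)) else 0))
          ≤ ∫ y in Set.Ioi (0:ℝ),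
              (Set.Ioc (0:ℝ) (C/ρ)).indicator (fun _ => Real.exp (-x)) y := by
        refine integral_mono_of_nonneg ?_ ?_ ?_
        · filter_upwards with y
          split_ifs <;> positivity
        · exact (integrable_indicator_iff measurableSet_Ioc).2
            (integrableOn_const measure_Ioc_lt_top.ne)
        · filter_upwards [self_mem_ae_restrict measurableSet_Ioi] with y hy
          split_ifs with h
          · have hy' : 0 < y := hy
            rw [Set.indicator_of_mem (Set.mem_Ioc.2 ⟨hy', key ρ x y hρ hx hy' h⟩)]
            exact exp_le_exp.2 (by linarith)
          · exact Set.indicator_nonneg (fun _ _ => (exp_pos _).le) _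
      refine hmono.trans ?_
      rw [setIntegral_indicator measurableSet_Ioc,
        Set.inter_eq_self_of_subset_right Set.Ioc_subset_Ioi_self,
        setIntegral_const, Real.volume_real_Ioc, sub_zero,
        max_eq_left hCρ, smul_eq_mul]
      ring_nf
      exact le_refl _
    calc (∫ x in Set.Ioi (0:ℝ), ∫ y in Set.Ioi (0:ℝ),
          (if (β * ρ * y ≤ max 0 (x / (εm / (ρ / η)) - 1)
                ∧ (1 + β * ρ * y) ^ 2 ≤ 1 + ρ * y)
              ∨ (β * ρ * y > max 0 (x / (εm / (ρ / η)) - 1)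
                ∧ max (1 + β * ρ * y / ((ρ / η) * x + 1))
                      (1 + max 0 (x / (εm / (ρ / η)) - 1))
                    * (1 + β * ρ * y) ≤ 1 + ρ * y)
            then Real.exp (-(x + y)) else 0))
        ≤ ∫ x in Set.Ioi (0:ℝ), Real.exp (-x) * (C / ρ) := by
          refine integral_mono_of_nonneg ?_ ?_ ?_
          · filter_upwards with x
            refine integral_nonneg fun y => ?_
            dsimp only
            split_ifs <;> positivity
          · have : IntegrableOn (fun x : ℝ => Real.exp (-x)) (Set.Ioi 0) := by
              simpa using exp_neg_integrableOn_Ioi 0 one_pos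
            exact this.mul_const _
          · filter_upwards [self_mem_ae_restrict measurableSet_Ioi] with x hx
            exact hinner x hx
      _ = C / ρ := by
          rw [integral_mul_const, integral_exp_neg_Ioi, neg_zero, exp_zero, one_mul]
  · exact tendsto_const_nhds.div_atTop tendsto_id
end
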